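/- arXiv:2305.12023 — 3 statements merged into one kernel-verified Lean document; each statement's English description precedes it below -/
import Mathlib

section
/- For every integer k ≥ 1 and every symmetric n×n 0,1-matrix M with n ≥ 1, if M has no k-wide symmetric division, then M admits a sequence of symmetric divisions each of which is 2(k+1)-diagonal. -/
open Finset

noncomputable section
open scoped Classical
set_option linter.unusedSectionVars false
set_option linter.unusedVariables false

namespace StretchPaper

/-! ### Partitions, red graphs, component twin-width and stretch-width of graphs -/

variable {V : Type} [Fintype V] [DecidableEq V]

/-- Two parts are inhomogeneous in `G`. -/
def Inhomog (G : SimpleGraph V) (X Y : Finset V) : Prop :=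
  (∃ x ∈ X, ∃ y ∈ Y, G.Adj x y) ∧ (∃ x ∈ X, ∃ y ∈ Y, ¬ G.Adj x y)

lemma Inhomog.symm {G : SimpleGraph V} {X Y : Finset V} (h : Inhomog G X Y) :
    Inhomog G Y X := by
  obtain ⟨⟨x, hx, y, hy, hxy⟩, ⟨x', hx', y', hy', hxy'⟩⟩ := h
  exact ⟨⟨y, hy, x, hx, hxy.symm⟩, ⟨y', hy', x', hx', fun hc => hxy' hc.symm⟩⟩

/-- `P` is obtained from `Q` by merging two parts. -/
def MergeStep (Q P : Finpartition (Finset.univ : Finset V)) : Prop :=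
  ∃ A ∈ Q.parts, ∃ B ∈ Q.parts, A ≠ B ∧
    P.parts = insert (A ∪ B) ((Q.parts.erase A).erase B)

/-- `l = [P_n, …, P_1]` is a partition sequence: it starts at the partition into
singletons, ends at the partition with the single part `univ`, and each partition is
obtained from the previous one by merging two parts. -/
def IsPartitionSeq (l : List (Finpartition (Finset.univ : Finset V))) : Prop :=
  (∃ P, l.head? = some P ∧ ∀ X ∈ P.parts, X.card = 1) ∧
  (∃ P, l.getLast? = some P ∧ P.parts = {Finset.univ}) ∧
  l.Chain' MergeStep

/-- The red graph of a partition: parts are vertices, inhomogeneous pairs are edges. -/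
def redGraph (G : SimpleGraph V) (P : Finpartition (Finset.univ : Finset V)) :
    SimpleGraph {X : Finset V // X ∈ P.parts} where
  Adj X Y := X ≠ Y ∧ Inhomog G X.1 Y.1
  symm := ⟨fun X Y h => ⟨h.1.symm, h.2.symm⟩⟩
  loopless := ⟨fun X h => h.1 rfl⟩

/-- The largest number of parts contained in a single connected component of the red graph. -/
def maxRedComponentSize (G : SimpleGraph V) (P : Finpartition (Finset.univ : Finset V)) : ℕ :=
  Finset.univ.sup fun X : {X : Finset V // X ∈ P.parts} =>
    (Finset.univ.filter fun Y => (redGraph G P).Reachable X Y).card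

/-- Component twin-width. -/
def ctww (G : SimpleGraph V) : ℕ :=
  sInf { k | ∃ l, IsPartitionSeq l ∧ ∀ P ∈ l, maxRedComponentSize G P ≤ k }

section Ord
variable [LinearOrder V]

/-- The convex closure (span) of a set of vertices along the linear order. -/
def conv (X : Finset V) : Finset V :=
  Finset.univ.filter fun v => (∃ a ∈ X, a ≤ v) ∧ ∃ b ∈ X, v ≤ b

/-- Two sets are in conflict if their spans intersect. -/
def Conflict (X Y : Finset V) : Prop := (conv X ∩ conv Y).Nonempty

/-- The union of a part `X` and of all parts adjacent to `X` in the red graph. -/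
def redClosedNbhd (G : SimpleGraph V) (P : Finpartition (Finset.univ : Finset V))
    (X : Finset V) : Finset V :=
  X ∪ (P.parts.filter fun Y => Y ≠ X ∧ Inhomog G X Y).biUnion id

/-- The stretch of a part `X` of `P`: the number of parts `Y ≠ X` that conflict with the
union of `X` and all parts adjacent to `X` in the red graph (i.e. that interfere with `X`). -/
def stretchPart (G : SimpleGraph V) (P : Finpartition (Finset.univ : Finset V))
    (X : Finset V) : ℕ :=
  ((P.parts.erase X).filter fun Y => Conflict Y (redClosedNbhd G P X)).card

/-- The stretch of a partition: the maximum stretch of a part. -/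
def stretchPartition (G : SimpleGraph V) (P : Finpartition (Finset.univ : Finset V)) : ℕ :=
  P.parts.sup fun X => stretchPart G P X

/-- Stretch-width of the ordered graph `(G, ≤)`. -/
def stwOrd (G : SimpleGraph V) : ℕ :=
  sInf { k | ∃ l, IsPartitionSeq l ∧ ∀ P ∈ l, stretchPartition G P ≤ k }

end Ord

/-- Stretch-width of `G`: minimum over all linear orders on the vertices. -/
def stw (G : SimpleGraph V) : ℕ :=
  sInf (Set.range fun L : LinearOrder V => @stwOrd V _ _ L G)


/-! ### Symmetric 0,1-matrices: stretch-width and divisions -/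

variable {n : ℕ}

/-- The zone `R × C` of `M` is non-constant. -/
def NonConstZone (M : Fin n → Fin n → Bool) (R C : Finset (Fin n)) : Prop :=
  ∃ r ∈ R, ∃ r' ∈ R, ∃ c ∈ C, ∃ c' ∈ C, M r c ≠ M r' c'

/-- `D_R`: the union of `R` and of all parts `C` of `P` with `R × C` non-constant. -/
def matBag (M : Fin n → Fin n → Bool) (P : Finpartition (Finset.univ : Finset (Fin n)))
    (R : Finset (Fin n)) : Finset (Fin n) :=
  R ∪ (P.parts.filter fun C => NonConstZone M R C).biUnion id

/-- The stretch value of a part `R` of `P`. -/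
def matStretchPart (M : Fin n → Fin n → Bool) (P : Finpartition (Finset.univ : Finset (Fin n)))
    (R : Finset (Fin n)) : ℕ :=
  (P.parts.filter fun Q => Conflict Q (matBag M P R)).card

/-- The stretch value of a partition. -/
def matStretch (M : Fin n → Fin n → Bool)
    (P : Finpartition (Finset.univ : Finset (Fin n))) : ℕ :=
  P.parts.sup fun R => matStretchPart M P R

/-- Stretch-width of a symmetric 0,1-matrix. -/
def stwM (M : Fin n → Fin n → Bool) : ℕ :=
  sInf { k | ∃ l : List (Finpartition (Finset.univ : Finset (Fin n))),
    IsPartitionSeq l ∧ ∀ P ∈ l, matStretch M P ≤ k }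

/-- A symmetric division `(I_1, …, I_p)` of `[n]` into consecutive nonempty intervals;
out-of-range indices denote the empty set. -/
structure SymDiv (n : ℕ) where
  p : ℕ
  I : ℤ → Finset (Fin n)
  out_empty : ∀ j : ℤ, (j < 1 ∨ (p : ℤ) < j) → I j = ∅
  in_nonempty : ∀ j : ℤ, 1 ≤ j → j ≤ (p : ℤ) → (I j).Nonempty
  interval : ∀ j : ℤ, ∀ a ∈ I j, ∀ c ∈ I j, ∀ b : Fin n, a ≤ b → b ≤ c → b ∈ I j
  increasing : ∀ j : ℤ, ∀ a ∈ I j, ∀ b ∈ I (j + 1), a < b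
  covers : ∀ v : Fin n, ∃ j : ℤ, v ∈ I j

/-- The restriction of row `r` of `M` to the columns outside `U`. -/
def rowRestr (M : Fin n → Fin n → Bool) (U : Finset (Fin n)) (r : Fin n) :
    Fin n → Option Bool :=
  fun c => if c ∈ U then none else some (M r c)

/-- The union `I_j ∪ I_{j+1} ∪ … ∪ I_{j+k-1}`. -/
def window (D : SymDiv n) (j : ℤ) (k : ℕ) : Finset (Fin n) :=
  (Finset.Icc j (j + (k : ℤ) - 1)).biUnion D.I

/-- The part `I_i` of `D` is `k`-wide. -/
def WidePart (M : Fin n → Fin n → Bool) (D : SymDiv n) (k : ℕ) (i : ℤ) : Prop :=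
  ∀ j : ℤ, j ≤ i → i ≤ j + (k : ℤ) - 1 →
    k ≤ ((D.I i).image (rowRestr M (window D j k))).card

/-- The division `D` is `k`-wide. -/
def WideDiv (M : Fin n → Fin n → Bool) (D : SymDiv n) (k : ℕ) : Prop :=
  ∀ i : ℤ, 1 ≤ i → i ≤ (D.p : ℤ) → WidePart M D k i

/-- The division `D` is `k`-diagonal. -/
def DiagDiv (M : Fin n → Fin n → Bool) (D : SymDiv n) (k : ℕ) : Prop :=
  ∀ i : ℤ, 1 ≤ i → i ≤ (D.p : ℤ) → ¬ WidePart M D k i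

/-- `D` is obtained from `E` by merging two consecutive intervals. -/
def DivMerge (E D : SymDiv n) : Prop :=
  D.p + 1 = E.p ∧ ∃ m : ℤ, 1 ≤ m ∧ m < (E.p : ℤ) ∧
    (∀ j : ℤ, j < m → D.I j = E.I j) ∧
    D.I m = E.I m ∪ E.I (m + 1) ∧
    (∀ j : ℤ, m < j → D.I j = E.I (j + 1))

/-- `l = [D_n, …, D_1]` is a sequence of symmetric divisions: from the division into
`n` singletons to the division with one part, merging two consecutive intervals at each step. -/
def IsDivSeq (l : List (SymDiv n)) : Prop :=
  (∃ D, l.head? = some D ∧ D.p = n) ∧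
  (∃ D, l.getLast? = some D ∧ D.p = 1) ∧
  l.Chain' DivMerge


/-! ### Ordered graphs, crossing edges, overlap graphs -/

section Overlap
variable {α : Type} [LinearOrder α]

/-- The left (smaller) endpoint of an edge. -/
def eL (e : Sym2 α) : α := Sym2.lift ⟨fun a b => min a b, fun a b => min_comm a b⟩ e

/-- The right (larger) endpoint of an edge. -/
def eR (e : Sym2 α) : α := Sym2.lift ⟨fun a b => max a b, fun a b => max_comm a b⟩ e

/-- Two edges cross: `L(e) ≺ L(f) ≺ R(e) ≺ R(f)` or `L(f) ≺ L(e) ≺ R(f) ≺ R(e)`. -/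
def Cross (e f : Sym2 α) : Prop :=
  (eL e < eL f ∧ eL f < eR e ∧ eR e < eR f) ∨
  (eL f < eL e ∧ eL e < eR f ∧ eR f < eR e)

/-- The overlap graph of `(G, ≤)` has a `K_{t,t}` subgraph: two disjoint sets of `t` edges
of `G` each, such that every edge of one set crosses every edge of the other. -/
def OvHasKtt (G : SimpleGraph α) (t : ℕ) : Prop :=
  ∃ A B : Finset (Sym2 α), ↑A ⊆ G.edgeSet ∧ ↑B ⊆ G.edgeSet ∧ Disjoint A B ∧
    A.card = t ∧ B.card = t ∧ ∀ e ∈ A, ∀ f ∈ B, Cross e f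

variable [Fintype α]

/-- The interior of an edge: the vertices strictly between its endpoints. -/
def edgeInterior (e : Sym2 α) : Finset α :=
  Finset.univ.filter fun x => eL e < x ∧ x < eR e

/-- The length of an edge: the number of vertices `x` with `L(e) ≺ x ⪯ R(e)`. -/
def edgeLen (e : Sym2 α) : ℕ := (Finset.univ.filter fun x => eL e < x ∧ x ≤ eR e).card

/-- The maximum length of an edge of `S` (0 if `S` is empty). -/
def lenSup (S : Finset (Sym2 α)) : ℕ := S.sup edgeLen

/-- A rainbow: a set of edges of `G` whose interiors are pairwise nested. -/
def IsRainbow (G : SimpleGraph α) (S : Finset (Sym2 α)) : Prop :=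
  ↑S ⊆ G.edgeSet ∧
  ∀ e ∈ S, ∀ f ∈ S, edgeInterior e ⊆ edgeInterior f ∨ edgeInterior f ⊆ edgeInterior e

/-- A rainbow over the vertex `v`. -/
def IsRainbowOver (G : SimpleGraph α) (S : Finset (Sym2 α)) (v : α) : Prop :=
  IsRainbow G S ∧ ∀ e ∈ S, eL e < v ∧ v < eR e

/-- A maximum rainbow over `v`. -/
def IsMaxRainbowOver (G : SimpleGraph α) (S : Finset (Sym2 α)) (v : α) : Prop :=
  IsRainbowOver G S v ∧ ∀ S' : Finset (Sym2 α), IsRainbowOver G S' v → S'.card ≤ S.card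

end Overlap

/-! ### Balanced separators and tree-decompositions -/

section Sep
variable {V : Type} [Fintype V] [DecidableEq V]

/-- `C` is a `c`-balanced separator of `G`. -/
def IsBalancedSeparator (G : SimpleGraph V) (c : ℝ) (C : Finset V) : Prop :=
  ∃ A B : Finset V, Disjoint A B ∧ A ∪ B = Finset.univ \ C ∧
    (∀ a ∈ A, ∀ b ∈ B, ¬ G.Adj a b) ∧
    (A.card : ℝ) ≤ (1 - c) * (Fintype.card V) ∧
    (B.card : ℝ) ≤ (1 - c) * (Fintype.card V)

/-- `(T, β)` is a tree-decomposition of `G`. -/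
def IsTreeDecomp (G : SimpleGraph V) {m : ℕ} (T : SimpleGraph (Fin m))
    (β : Fin m → Finset V) : Prop :=
  T.Connected ∧ T.IsAcyclic ∧
  (∀ v : V, ∃ t, v ∈ β t) ∧
  (∀ u v : V, G.Adj u v → ∃ t, u ∈ β t ∧ v ∈ β t) ∧
  (∀ v : V, (T.induce {t | v ∈ β t}).Connected)

/-- Treewidth: the minimum width of a tree-decomposition of `G`. -/
def treewidth (G : SimpleGraph V) : ℕ :=
  sInf { k | ∃ (m : ℕ) (T : SimpleGraph (Fin m)) (β : Fin m → Finset V),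
    IsTreeDecomp G T β ∧ (Finset.univ.sup fun t => (β t).card) - 1 ≤ k }

end Sep


/-! ### Subdivisions -/

/-- The internal vertices of a walk (its support minus the two endpoints). -/
def walkInternal {W : Type} {H : SimpleGraph W} {a b : W} (p : H.Walk a b) : List W :=
  p.support.tail.dropLast

/-- `H` is obtained from `G` by subdividing every edge at least `s` times. -/
def IsSubdivisionGE {V W : Type} (G : SimpleGraph V) (H : SimpleGraph W) (s : ℕ) : Prop :=
  ∃ (φ : V ↪ W) (p : ∀ u v : V, G.Adj u v → H.Walk (φ u) (φ v)),
    (∀ u v huv, (p u v huv).IsPath) ∧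
    (∀ u v huv, s + 1 ≤ (p u v huv).length) ∧
    (∀ u v huv, p u v huv = (p v u huv.symm).reverse) ∧
    (∀ u v huv, ∀ x ∈ walkInternal (p u v huv), x ∉ Set.range φ) ∧
    (∀ u v huv, ∀ u' v' h', s(u, v) ≠ s(u', v') →
      ∀ x ∈ walkInternal (p u v huv), x ∉ walkInternal (p u' v' h')) ∧
    (∀ x : W, x ∈ Set.range φ ∨ ∃ u v huv, x ∈ walkInternal (p u v huv)) ∧
    (∀ e ∈ H.edgeSet, ∃ u v huv, e ∈ (p u v huv).edges)

/-- Subdividing the edge `uv` of `G` once: the new vertex is `none : Option V`. -/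
def subdivideOnce {V : Type} (G : SimpleGraph V) (u v : V) : SimpleGraph (Option V) where
  Adj x y :=
    match x, y with
    | some a, some b => G.Adj a b ∧ s(a, b) ≠ s(u, v)
    | some a, none => a = u ∨ a = v
    | none, some b => b = u ∨ b = v
    | none, none => False
  symm := by
    refine ⟨?_⟩
    rintro (_ | a) (_ | b) h
    · exact h
    · exact h
    · exact h
    · exact ⟨h.1.symm, by rw [Sym2.eq_swap]; exact h.2⟩
  loopless := by
    refine ⟨?_⟩
    rintro (_ | a) h
    · exact h
    · exact G.loopless.irrefl a h.1

/-! ### Flattening (iterated subdivisions) -/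

/-- The number of vertices strictly between `u` and `v`. -/
def interiorCount {V : Type} [Fintype V] [LinearOrder V] (u v : V) : ℕ :=
  (Finset.univ.filter fun x => u < x ∧ x < v).card

/-- The ordered graph `H` is obtained from `(G, ≤)` by flattening the edge `uv`, via the
order-embedding `φ` of old vertices and the new vertices `w 0, …, w h` interleaved with
the vertices between `u` and `v`. -/
def IsFlattenStepWith {V W : Type} [Fintype V] [LinearOrder V] [Fintype W] [LinearOrder W]
    (G : SimpleGraph V) (u v : V) (H : SimpleGraph W) (φ : V → W) (w : ℕ → W) : Prop :=
  G.Adj u v ∧ u < v ∧ StrictMono φ ∧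
  (∀ x : W, (∃ a : V, x = φ a) ∨ ∃ i ≤ interiorCount u v, x = w i) ∧
  (∀ a : V, ∀ i ≤ interiorCount u v, φ a ≠ w i) ∧
  (∀ i ≤ interiorCount u v,
    (Finset.univ.filter fun x => u ≤ x ∧ x ≤ v ∧ φ x < w i).card = i + 1) ∧
  (∀ a b : W, H.Adj a b ↔
    ((∃ x y : V, G.Adj x y ∧ s(x, y) ≠ s(u, v) ∧ s(a, b) = s(φ x, φ y)) ∨
     s(a, b) = s(φ u, w 0) ∨
     (∃ i : ℕ, i + 1 ≤ interiorCount u v ∧ s(a, b) = s(w i, w (i + 1))) ∨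
     s(a, b) = s(w (interiorCount u v), φ v)))

/-! ### The graphs `A_3^h` -/

/-- The graph `A_3^h` on vertex set `{0, …, 3^h − 1}`: distinct `u, v` are adjacent iff
`|⌊u/3^l⌋ − ⌊v/3^l⌋| = 3` for some `l < h`. -/
def Agraph (h : ℕ) : SimpleGraph (Fin (3 ^ h)) where
  Adj u v := u ≠ v ∧ ∃ l < h,
    ((u : ℕ) / 3 ^ l = (v : ℕ) / 3 ^ l + 3 ∨ (v : ℕ) / 3 ^ l = (u : ℕ) / 3 ^ l + 3)
  symm := by
    refine ⟨?_⟩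
    rintro u v ⟨hne, l, hl, hd⟩
    exact ⟨hne.symm, l, hl, hd.symm⟩
  loopless := ⟨fun u h => h.1 rfl⟩




/-! ### Auxiliary lemmas for the main theorem -/

section Aux
variable {n : ℕ}

lemma SymDiv.mem_range {D : SymDiv n} {j : ℤ} {v : Fin n} (hv : v ∈ D.I j) :
    1 ≤ j ∧ j ≤ (D.p : ℤ) := by
  by_contra hc
  rw [D.out_empty j (by omega)] at hv
  simp at hv

lemma SymDiv.lt_of_idx_lt (D : SymDiv n) : ∀ (d : ℕ) (j : ℤ) (a b : Fin n),
    a ∈ D.I j → b ∈ D.I (j + d + 1) → a < b := by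
  intro d
  induction d with
  | zero =>
    intro j a b ha hb
    exact D.increasing j a ha b (by simpa using hb)
  | succ d ih =>
    intro j a b ha hb
    have h1 := (D.mem_range ha).1
    have h2 := (D.mem_range hb).2
    obtain ⟨c, hc⟩ := D.in_nonempty (j + d + 1) (by omega) (by push_cast at h2; omega)
    refine lt_trans (ih j a c ha hc) (D.increasing (j + d + 1) c hc b ?_)
    have he : j + (d : ℤ) + 1 + 1 = j + ((d + 1 : ℕ) : ℤ) + 1 := by push_cast; ring
    rw [he]; exact hb

lemma SymDiv.lt_of_lt (D : SymDiv n) {j j' : ℤ} (h : j < j') {a b : Fin n}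
    (ha : a ∈ D.I j) (hb : b ∈ D.I j') : a < b := by
  have hd : j' = j + ((j' - j - 1).toNat : ℤ) + 1 := by omega
  rw [hd] at hb
  exact D.lt_of_idx_lt _ j a b ha hb

lemma card_image_rowRestr_le (M : Fin n → Fin n → Bool) {U U' R R' : Finset (Fin n)}
    (hU : U ⊆ U') (hR : R ⊆ R') :
    (R.image (rowRestr M U')).card ≤ (R'.image (rowRestr M U)).card := by
  have key : R.image (rowRestr M U') =
      (R.image (rowRestr M U)).image (fun f c => if c ∈ U' then none else f c) := by
    rw [Finset.image_image]
    apply Finset.image_congr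
    intro r _
    funext c
    simp only [Function.comp, rowRestr]
    by_cases h1 : c ∈ U'
    · simp [h1]
    · have h2 : c ∉ U := fun hc => h1 (hU hc)
      simp [h1, h2]
  rw [key]
  exact le_trans Finset.card_image_le
    (Finset.card_le_card (Finset.image_subset_image hR))

def singletonDiv (n : ℕ) : SymDiv n where
  p := n
  I j := Finset.univ.filter (fun v : Fin n => (v : ℤ) = j - 1)
  out_empty := by
    intro j hj
    rw [Finset.eq_empty_iff_forall_notMem]
    intro v hv
    simp only [Finset.mem_filter] at hv
    have := v.isLt
    omega
  in_nonempty := by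
    intro j h1 h2
    refine ⟨⟨(j - 1).toNat, by omega⟩, ?_⟩
    simp only [Finset.mem_filter, Finset.mem_univ, true_and]
    simp
    omega
  interval := by
    intro j a ha c hc b hab hbc
    simp only [Finset.mem_filter, Finset.mem_univ, true_and] at ha hc ⊢
    have : a = c := Fin.ext (by omega)
    subst this
    have : b = a := le_antisymm hbc hab
    subst this
    exact ha
  increasing := by
    intro j a ha b hb
    simp only [Finset.mem_filter, Finset.mem_univ, true_and] at ha hb
    simp only [Fin.lt_def]
    omega
  covers := by
    intro v
    refine ⟨(v : ℤ) + 1, ?_⟩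
    simp

lemma singletonDiv_card (j : ℤ) : ((singletonDiv n).I j).card ≤ 1 := by
  apply Finset.card_le_one.mpr
  intro a ha b hb
  simp only [singletonDiv, Finset.mem_filter, Finset.mem_univ, true_and] at ha hb
  exact Fin.ext (by omega)

/-- Merging parts `m` and `m+1` of a division. -/
def mergeDiv (D : SymDiv n) (m : ℤ) (hm1 : 1 ≤ m) (hm2 : m < (D.p : ℤ)) : SymDiv n where
  p := D.p - 1
  I j := if j < m then D.I j else if j = m then D.I m ∪ D.I (m + 1) else D.I (j + 1)
  out_empty := by
    intro j hj
    have hc : ((D.p - 1 : ℕ) : ℤ) = (D.p : ℤ) - 1 := by omega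
    rw [hc] at hj
    rcases hj with hj | hj
    · rw [if_pos (by omega)]
      exact D.out_empty j (Or.inl hj)
    · rw [if_neg (by omega), if_neg (by omega)]
      exact D.out_empty (j + 1) (Or.inr (by omega))
  in_nonempty := by
    intro j h1 h2
    have hc : ((D.p - 1 : ℕ) : ℤ) = (D.p : ℤ) - 1 := by omega
    rw [hc] at h2
    rcases lt_trichotomy j m with hj | hj | hj
    · rw [if_pos hj]
      exact D.in_nonempty j h1 (by omega)
    · rw [if_neg (by omega), if_pos hj]
      obtain ⟨v, hv⟩ := D.in_nonempty m hm1 (by omega)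
      exact ⟨v, Finset.mem_union_left _ hv⟩
    · rw [if_neg (by omega), if_neg (by omega)]
      exact D.in_nonempty (j + 1) (by omega) (by omega)
  interval := by
    intro j a ha c hc b hab hbc
    rcases lt_trichotomy j m with hj | hj | hj
    · rw [if_pos hj] at ha hc ⊢
      exact D.interval j a ha c hc b hab hbc
    · rw [if_neg (by omega), if_pos hj] at ha hc ⊢
      obtain ⟨s, hbs⟩ := D.covers b
      have hsa : m ≤ s := by
        by_contra hlt
        rcases Finset.mem_union.mp ha with ha' | ha'
        · exact absurd (D.lt_of_lt (by omega) hbs ha') (not_lt.mpr hab)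
        · exact absurd (D.lt_of_lt (by omega) hbs ha') (not_lt.mpr hab)
      have hsc : s ≤ m + 1 := by
        by_contra hlt
        rcases Finset.mem_union.mp hc with hc' | hc'
        · exact absurd (D.lt_of_lt (by omega) hc' hbs) (not_lt.mpr hbc)
        · exact absurd (D.lt_of_lt (by omega) hc' hbs) (not_lt.mpr hbc)
      rcases eq_or_lt_of_le hsa with he | hlt
      · exact Finset.mem_union_left _ (he ▸ hbs)
      · have : s = m + 1 := by omega
        exact Finset.mem_union_right _ (this ▸ hbs)
    · rw [if_neg (by omega), if_neg (by omega)] at ha hc ⊢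
      exact D.interval (j + 1) a ha c hc b hab hbc
  increasing := by
    intro j a ha b hb
    have key : ∀ (t : ℤ) (x : Fin n),
        (x ∈ (if t < m then D.I t else if t = m then D.I m ∪ D.I (m + 1) else D.I (t + 1))) →
        ∃ s : ℤ, x ∈ D.I s ∧ t ≤ s ∧ s ≤ t + 1 ∧ (t < m → s = t) ∧ (m < t → s = t + 1) := by
      intro t x hx
      rcases lt_trichotomy t m with ht | ht | ht
      · rw [if_pos ht] at hx
        exact ⟨t, hx, le_refl _, by omega, fun _ => rfl, by omega⟩
      · rw [if_neg (by omega), if_pos ht] at hx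
        rcases Finset.mem_union.mp hx with hx' | hx'
        · exact ⟨t, (by rw [ht]; exact hx'), le_refl _, by omega, by omega, by omega⟩
        · exact ⟨t + 1, (by rw [ht]; exact hx'), by omega, le_refl _, by omega, by omega⟩
      · rw [if_neg (by omega), if_neg (by omega)] at hx
        exact ⟨t + 1, hx, by omega, le_refl _, by omega, fun _ => rfl⟩
    obtain ⟨s, hs, hs1, hs2, hs3, hs4⟩ := key j a ha
    obtain ⟨s', hs', hs1', hs2', hs3', hs4'⟩ := key (j + 1) b hb
    have : s < s' := by
      rcases lt_trichotomy j m with hj | hj | hj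
      · have := hs3 hj; omega
      · have := hs4' (by omega); omega
      · have h1 := hs4 hj; have h2 := hs4' (by omega); omega
    exact D.lt_of_lt this hs hs'
  covers := by
    intro v
    obtain ⟨s, hs⟩ := D.covers v
    by_cases h1 : s ≤ m
    · refine ⟨s, ?_⟩
      rcases lt_or_eq_of_le h1 with h | h
      · rw [if_pos h]; exact hs
      · rw [if_neg (by omega), if_pos h]
        exact Finset.mem_union_left _ (h ▸ hs)
    · refine ⟨s - 1, ?_⟩
      by_cases h2 : s = m + 1
      · rw [if_neg (by omega), if_pos (by omega)]
        exact Finset.mem_union_right _ (by rw [show m + 1 = s by omega]; exact hs)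
      · rw [if_neg (by omega), if_neg (by omega), show s - 1 + 1 = s by ring]
        exact hs

lemma mergeDiv_I_sub (D : SymDiv n) (m : ℤ) (hm1 : 1 ≤ m) (hm2 : m < (D.p : ℤ)) (t : ℤ) :
    D.I t ⊆ (mergeDiv D m hm1 hm2).I (if t ≤ m then t else t - 1) := by
  intro x hx
  rcases lt_trichotomy t m with h1 | h1 | h1
  · rw [if_pos (le_of_lt h1)]
    simp only [mergeDiv]
    rw [if_pos h1]
    exact hx
  · rw [if_pos (le_of_eq h1)]
    simp only [mergeDiv]
    rw [if_neg (by omega), if_pos h1]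
    exact Finset.mem_union_left _ (h1 ▸ hx)
  · rw [if_neg (by omega)]
    simp only [mergeDiv]
    by_cases h3 : t = m + 1
    · rw [if_neg (by omega), if_pos (by omega)]
      exact Finset.mem_union_right _ (h3 ▸ hx)
    · rw [if_neg (by omega), if_neg (by omega), show t - 1 + 1 = t by ring]
      exact hx

lemma window_sub_of {D E : SymDiv n} {j j' : ℤ} {K K' : ℕ}
    (h : ∀ t : ℤ, j ≤ t → t ≤ j + K - 1 →
      ∃ t', j' ≤ t' ∧ t' ≤ j' + K' - 1 ∧ D.I t ⊆ E.I t') :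
    window D j K ⊆ window E j' K' := by
  intro x hx
  simp only [window, Finset.mem_biUnion, Finset.mem_Icc] at hx ⊢
  obtain ⟨t, ⟨ht1, ht2⟩, hxt⟩ := hx
  obtain ⟨t', h1, h2, h3⟩ := h t ht1 ht2
  exact ⟨t', ⟨h1, h2⟩, h3 hxt⟩

lemma mergeDiv_I_lt (D : SymDiv n) (m : ℤ) (hm1 : 1 ≤ m) (hm2 : m < (D.p : ℤ))
    {i : ℤ} (hi : i < m) : (mergeDiv D m hm1 hm2).I i = D.I i := by
  simp only [mergeDiv]; rw [if_pos hi]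

lemma mergeDiv_I_gt (D : SymDiv n) (m : ℤ) (hm1 : 1 ≤ m) (hm2 : m < (D.p : ℤ))
    {i : ℤ} (hi : m < i) : (mergeDiv D m hm1 hm2).I i = D.I (i + 1) := by
  simp only [mergeDiv]; rw [if_neg (by omega), if_neg (by omega)]

lemma mergeDiv_I_self (D : SymDiv n) (m : ℤ) (hm1 : 1 ≤ m) (hm2 : m < (D.p : ℤ)) :
    (mergeDiv D m hm1 hm2).I m = D.I m ∪ D.I (m + 1) := by
  simp only [mergeDiv]; rw [if_neg (by omega)]; simp

lemma merge_not_wide (M : Fin n → Fin n → Bool) (D : SymDiv n) (m : ℤ)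
    (hm1 : 1 ≤ m) (hm2 : m < (D.p : ℤ)) (K : ℕ) (hdiag : DiagDiv M D K)
    {i' : ℤ} (hi1 : 1 ≤ i') (hi2 : i' ≤ (((mergeDiv D m hm1 hm2).p : ℕ) : ℤ))
    (hne : i' ≠ m) : ¬ WidePart M (mergeDiv D m hm1 hm2) K i' := by
  have hpc : (((mergeDiv D m hm1 hm2).p : ℕ) : ℤ) = (D.p : ℤ) - 1 := by
    simp only [mergeDiv]; omega
  rw [hpc] at hi2
  rcases lt_or_gt_of_ne hne with hlt | hgt
  · -- i' < m, old part is i'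
    have hnw := hdiag i' hi1 (by omega)
    rw [WidePart] at hnw
    push_neg at hnw
    obtain ⟨j, hj1, hj2, hcard⟩ := hnw
    intro hw
    have hw' := hw j hj1 hj2
    have hsub : window D j K ⊆ window (mergeDiv D m hm1 hm2) j K := by
      apply window_sub_of
      intro t ht1 ht2
      refine ⟨if t ≤ m then t else t - 1, ?_, ?_, mergeDiv_I_sub D m hm1 hm2 t⟩
      · split <;> omega
      · split <;> omega
    rw [mergeDiv_I_lt D m hm1 hm2 hlt] at hw'
    have hle := card_image_rowRestr_le M hsub (Finset.Subset.refl (D.I i'))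
    omega
  · -- m < i', old part is i' + 1
    have hnw := hdiag (i' + 1) (by omega) (by omega)
    rw [WidePart] at hnw
    push_neg at hnw
    obtain ⟨j, hj1, hj2, hcard⟩ := hnw
    intro hw
    have hw' := hw (j - 1) (by omega) (by omega)
    have hsub : window D j K ⊆ window (mergeDiv D m hm1 hm2) (j - 1) K := by
      apply window_sub_of
      intro t ht1 ht2
      refine ⟨if t ≤ m then t else t - 1, ?_, ?_, mergeDiv_I_sub D m hm1 hm2 t⟩
      · split <;> omega
      · split <;> omega
    rw [mergeDiv_I_gt D m hm1 hm2 hgt] at hw'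
    have hle := card_image_rowRestr_le M hsub (Finset.Subset.refl (D.I (i' + 1)))
    omega

/-- Grouping the parts of `D` into consecutive pairs (the last block having size 2 or 3). -/
def pairDiv (D : SymDiv n) (hp : 2 ≤ D.p) : SymDiv n where
  p := D.p / 2
  I t := if 1 ≤ t ∧ t ≤ ((D.p / 2 : ℕ) : ℤ) then
      (Finset.Icc (2 * t - 1) (if t = ((D.p / 2 : ℕ) : ℤ) then (D.p : ℤ) else 2 * t)).biUnion D.I
    else ∅
  out_empty := by
    intro t ht
    rw [if_neg (by omega)]
  in_nonempty := by
    intro t h1 h2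
    rw [if_pos ⟨h1, h2⟩]
    have hq : 2 * (D.p / 2 : ℕ) ≤ D.p := by omega
    obtain ⟨v, hv⟩ := D.in_nonempty (2 * t - 1) (by omega) (by omega)
    refine ⟨v, Finset.mem_biUnion.mpr ⟨2 * t - 1, Finset.mem_Icc.mpr ⟨le_refl _, ?_⟩, hv⟩⟩
    split <;> omega
  interval := by
    intro t a ha c hc b hab hbc
    by_cases h : 1 ≤ t ∧ t ≤ ((D.p / 2 : ℕ) : ℤ)
    · rw [if_pos h] at ha hc ⊢
      simp only [Finset.mem_biUnion, Finset.mem_Icc] at ha hc ⊢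
      obtain ⟨s, ⟨hs1, hs2⟩, has⟩ := ha
      obtain ⟨s', ⟨hs1', hs2'⟩, hcs⟩ := hc
      obtain ⟨s'', hbs⟩ := D.covers b
      have h1 : 2 * t - 1 ≤ s'' := by
        by_contra hcon
        exact absurd (D.lt_of_lt (by omega) hbs has) (not_lt.mpr hab)
      have h2 : s'' ≤ (if t = ((D.p / 2 : ℕ) : ℤ) then (D.p : ℤ) else 2 * t) := by
        by_contra hcon
        push_neg at hcon
        exact absurd (D.lt_of_lt (by omega) hcs hbs) (not_lt.mpr hbc)
      exact ⟨s'', ⟨h1, h2⟩, hbs⟩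
    · rw [if_neg h] at ha
      simp at ha
  increasing := by
    intro t a ha b hb
    by_cases h : 1 ≤ t ∧ t ≤ ((D.p / 2 : ℕ) : ℤ)
    · by_cases h' : 1 ≤ t + 1 ∧ t + 1 ≤ ((D.p / 2 : ℕ) : ℤ)
      · rw [if_pos h] at ha
        rw [if_pos h'] at hb
        simp only [Finset.mem_biUnion, Finset.mem_Icc] at ha hb
        obtain ⟨s, ⟨hs1, hs2⟩, has⟩ := ha
        obtain ⟨s', ⟨hs1', hs2'⟩, hbs⟩ := hb
        have hsu : s ≤ 2 * t := by
          have : ¬ t = ((D.p / 2 : ℕ) : ℤ) := by omega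
          rw [if_neg this] at hs2
          exact hs2
        exact D.lt_of_lt (by omega) has hbs
      · rw [if_neg h'] at hb; simp at hb
    · rw [if_neg h] at ha; simp at ha
  covers := by
    intro v
    obtain ⟨s, hs⟩ := D.covers v
    obtain ⟨hs1, hs2⟩ := D.mem_range hs
    have hq1 : 1 ≤ D.p / 2 := by omega
    have hq2 : 2 * (D.p / 2 : ℕ) ≤ D.p ∧ D.p ≤ 2 * (D.p / 2 : ℕ) + 1 := by omega
    refine ⟨min ((s + 1) / 2) ((D.p / 2 : ℕ) : ℤ), ?_⟩
    rw [if_pos (by omega)]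
    simp only [Finset.mem_biUnion, Finset.mem_Icc]
    refine ⟨s, ⟨by omega, ?_⟩, hs⟩
    split <;> omega

lemma pairDiv_I_sup (D : SymDiv n) (hp : 2 ≤ D.p) {t s : ℤ}
    (ht1 : 1 ≤ t) (ht2 : t ≤ ((D.p / 2 : ℕ) : ℤ))
    (hs1 : 2 * t - 1 ≤ s) (hs2 : s ≤ 2 * t) (hsp : s ≤ (D.p : ℤ)) :
    D.I s ⊆ (pairDiv D hp).I t := by
  intro x hx
  simp only [pairDiv]
  rw [if_pos ⟨ht1, ht2⟩]
  simp only [Finset.mem_biUnion, Finset.mem_Icc]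
  refine ⟨s, ⟨hs1, ?_⟩, hx⟩
  split <;> omega

lemma pairDiv_wide (M : Fin n → Fin n → Bool) (D : SymDiv n) (hp : 2 ≤ D.p)
    (k : ℕ) (hk : 1 ≤ k)
    (hall : ∀ (m : ℤ) (hm1 : 1 ≤ m) (hm2 : m < (D.p : ℤ)),
      WidePart M (mergeDiv D m hm1 hm2) (2 * (k + 1)) m) :
    WideDiv M (pairDiv D hp) k := by
  intro t ht1 ht2 j hj1 hj2
  have hq : 2 * (D.p / 2 : ℕ) ≤ D.p ∧ D.p ≤ 2 * (D.p / 2 : ℕ) + 1 := by omega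
  have hpc : (((pairDiv D hp).p : ℕ) : ℤ) = ((D.p / 2 : ℕ) : ℤ) := by rfl
  rw [hpc] at ht2
  set m : ℤ := 2 * t - 1 with hm
  have hm1 : 1 ≤ m := by omega
  have hm2 : m < (D.p : ℤ) := by omega
  have hw := hall m hm1 hm2 (2 * j - 2) (by omega) (by omega)
  have hsub : window (pairDiv D hp) j k ⊆
      window (mergeDiv D m hm1 hm2) (2 * j - 2) (2 * (k + 1)) := by
    intro x hx
    simp only [window, Finset.mem_biUnion, Finset.mem_Icc] at hx ⊢
    obtain ⟨u, ⟨hu1, hu2⟩, hxu⟩ := hx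
    simp only [pairDiv] at hxu
    by_cases hu : 1 ≤ u ∧ u ≤ ((D.p / 2 : ℕ) : ℤ)
    · rw [if_pos hu] at hxu
      simp only [Finset.mem_biUnion, Finset.mem_Icc] at hxu
      obtain ⟨s, ⟨hs1, hs2⟩, hxs⟩ := hxu
      have hsub2 : s ≤ 2 * u + 1 := by split at hs2 <;> omega
      refine ⟨if s ≤ m then s else s - 1, ⟨?_, ?_⟩,
        mergeDiv_I_sub D m hm1 hm2 s hxs⟩
      · split <;> omega
      · split <;> push_cast <;> omega
    · rw [if_neg hu] at hxu
      simp at hxu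
  have hrow : (mergeDiv D m hm1 hm2).I m ⊆ (pairDiv D hp).I t := by
    rw [mergeDiv_I_self]
    apply Finset.union_subset
    · exact pairDiv_I_sup D hp ht1 ht2 (by omega) (by omega) (by omega)
    · exact pairDiv_I_sup D hp ht1 ht2 (by omega) (by omega) (by omega)
  have hle := card_image_rowRestr_le M hsub hrow
  omega

lemma exists_diag_merge (M : Fin n → Fin n → Bool) (k : ℕ) (hk : 1 ≤ k)
    (h : ¬ ∃ D : SymDiv n, WideDiv M D k)
    (D : SymDiv n) (hp : 2 ≤ D.p) (hdiag : DiagDiv M D (2 * (k + 1))) :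
    ∃ E : SymDiv n, DivMerge D E ∧ E.p + 1 = D.p ∧ DiagDiv M E (2 * (k + 1)) := by
  by_contra hcon
  push_neg at hcon
  apply h
  refine ⟨pairDiv D hp, ?_⟩
  apply pairDiv_wide M D hp k hk
  intro m hm1 hm2
  have hmergeP : (mergeDiv D m hm1 hm2).p + 1 = D.p := by
    simp only [mergeDiv]
    omega
  have hDM : DivMerge D (mergeDiv D m hm1 hm2) :=
    ⟨hmergeP, m, hm1, hm2, fun j hj => mergeDiv_I_lt D m hm1 hm2 hj,
      mergeDiv_I_self D m hm1 hm2, fun j hj => mergeDiv_I_gt D m hm1 hm2 hj⟩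
  have hnd : ¬ DiagDiv M (mergeDiv D m hm1 hm2) (2 * (k + 1)) :=
    fun hd => hcon (mergeDiv D m hm1 hm2) hDM hmergeP hd
  rw [DiagDiv] at hnd
  push_neg at hnd
  obtain ⟨i, hi1, hi2, hwide⟩ := hnd
  by_cases him : i = m
  · exact him ▸ hwide
  · exact absurd hwide (merge_not_wide M D m hm1 hm2 _ hdiag hi1 hi2 him)

lemma build_list (M : Fin n → Fin n → Bool) (k : ℕ) (hk : 1 ≤ k)
    (h : ¬ ∃ D : SymDiv n, WideDiv M D k) :
    ∀ (p : ℕ) (D : SymDiv n), D.p = p → 1 ≤ p → DiagDiv M D (2 * (k + 1)) →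
    ∃ l : List (SymDiv n), l.head? = some D ∧
      (∃ D', l.getLast? = some D' ∧ D'.p = 1) ∧
      l.Chain' DivMerge ∧ ∀ D'' ∈ l, DiagDiv M D'' (2 * (k + 1)) := by
  intro p
  induction p with
  | zero => intro D _ h1 _; omega
  | succ p ih =>
    intro D hDp hp1 hdiag
    by_cases hp : p = 0
    · subst hp
      refine ⟨[D], rfl, ⟨D, rfl, by omega⟩, List.isChain_singleton D, ?_⟩
      intro D'' hD''
      simp only [List.mem_singleton] at hD''
      subst hD''
      exact hdiag
    · obtain ⟨E, hDM, hEp, hEdiag⟩ := exists_diag_merge M k hk h D (by omega) hdiag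
      obtain ⟨l, hhead, hlast, hchain, hall⟩ := ih E (by omega) (by omega) hEdiag
      cases l with
      | nil => simp at hhead
      | cons a l' =>
        have haE : a = E := by simpa using hhead
        subst haE
        refine ⟨D :: a :: l', rfl, ?_, ?_, ?_⟩
        · obtain ⟨D', hD', hD'p⟩ := hlast
          exact ⟨D', by rw [List.getLast?_cons_cons]; exact hD', hD'p⟩
        · exact List.isChain_cons.mpr ⟨fun b hb => by simp at hb; subst hb; exact hDM, hchain⟩
        · intro D'' hD''
          rcases List.mem_cons.mp hD'' with h1 | h1
          · subst h1; exact hdiag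
          · exact hall D'' h1

end Aux

/-- If the symmetric 0,1-matrix `M` has no `k`-wide symmetric division, then `M` admits a
sequence of symmetric divisions each of which is `2(k+1)`-diagonal. -/
theorem diag_div_seq_of_no_wide_division (n k : ℕ) (hk : 1 ≤ k) (hn : 1 ≤ n)
    (M : Fin n → Fin n → Bool) (hM : ∀ i j, M i j = M j i)
    (h : ¬ ∃ D : SymDiv n, WideDiv M D k) :
    ∃ l : List (SymDiv n), IsDivSeq l ∧ ∀ D ∈ l, DiagDiv M D (2 * (k + 1)) := by
  have hsdiag : DiagDiv M (singletonDiv n) (2 * (k + 1)) := by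
    intro i hi1 hi2 hw
    have hcard := hw i (le_refl i) (by push_cast; omega)
    have hc1 : (((singletonDiv n).I i).image
        (rowRestr M (window (singletonDiv n) i (2 * (k + 1))))).card ≤ 1 :=
      le_trans Finset.card_image_le (singletonDiv_card i)
    omega
  obtain ⟨l, hhead, hlast, hchain, hall⟩ :=
    build_list M k hk h n (singletonDiv n) rfl hn hsdiag
  exact ⟨l, ⟨⟨singletonDiv n, hhead, rfl⟩, hlast, hchain⟩, hall⟩

end StretchPaper
end
end

section
/- For every integer k ≥ 1, if a symmetric n×n 0,1-matrix M has no k-wide symmetric division, then stw(M) ≤ 32(k+1)³. -/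
open Finset

noncomputable section
open scoped Classical
set_option linter.unusedSectionVars false
set_option linter.unusedVariables false

namespace StretchPaper

/-! ### Partitions, red graphs, component twin-width and stretch-width of graphs -/

variable {V : Type} [Fintype V] [DecidableEq V]

/-! ### Symmetric 0,1-matrices: stretch-width and divisions -/

variable {n : ℕ}

/-! ### Auxiliary development for the main theorem -/

section Dev

variable {V : Type} [Fintype V] [DecidableEq V]

namespace Dev

variable (P : Finpartition (Finset.univ : Finset V)) {A B : Finset V}

lemma union_not_mem (hA : A ∈ P.parts) (hB : B ∈ P.parts) (hAB : A ≠ B) :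
    A ∪ B ∉ P.parts := by
  intro hU
  have hAne : A.Nonempty := P.nonempty_of_mem_parts hA
  have hdisj : Disjoint A B := P.disjoint hA hB hAB
  have hne : A ∪ B ≠ A := by
    intro hEq
    have hBA : B ⊆ A := by
      intro b hb
      have : b ∈ A ∪ B := Finset.mem_union_right _ hb
      rwa [hEq] at this
    have : B = ∅ := by
      have h3 : Disjoint B B := hdisj.mono_left hBA
      simpa [disjoint_self] using h3
    exact (P.nonempty_of_mem_parts hB).ne_empty this
  have h2 : Disjoint (A ∪ B) A := P.disjoint hU hA hne
  have h4 : Disjoint A A := h2.mono_left (Finset.subset_union_left)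
  rw [disjoint_self] at h4
  simp only [Finset.bot_eq_empty] at h4
  exact hAne.ne_empty h4

/-- Merge two parts of a finpartition of `univ`. -/
def mergeP (hA : A ∈ P.parts) (hB : B ∈ P.parts) (hAB : A ≠ B) :
    Finpartition (Finset.univ : Finset V) where
  parts := insert (A ∪ B) ((P.parts.erase A).erase B)
  supIndep := by
    rw [Finset.supIndep_iff_pairwiseDisjoint]
    intro X hX Y hY hXY
    simp only [coe_insert, Set.mem_insert_iff, mem_coe, Finset.mem_erase] at hX hY
    have base : ∀ {S T : Finset V}, S ∈ P.parts → T ∈ P.parts → S ≠ T → Disjoint (id S) (id T) :=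
      fun hS hT hST => P.disjoint hS hT hST
    rcases hX with rfl | ⟨hYB, hYA, hXp⟩
    · rcases hY with rfl | ⟨hYB, hYA, hYp⟩
      · exact absurd rfl hXY
      · refine Finset.disjoint_union_left.2 ⟨base hA hYp ?_, base hB hYp ?_⟩
        · exact fun e => hYA e.symm
        · exact fun e => hYB e.symm
    · rcases hY with rfl | ⟨hZB, hZA, hYp⟩
      · exact (Finset.disjoint_union_right.2 ⟨base hXp hA hYA, base hXp hB hYB⟩)
      · exact base hXp hYp hXY
  sup_parts := by
    apply Finset.Subset.antisymm
    · intro v hv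
      rw [Finset.mem_sup] at hv
      exact Finset.mem_univ v
    · intro v _
      rw [Finset.mem_sup]
      obtain ⟨X, hXp, hvX⟩ := P.exists_mem (a := v) (Finset.mem_univ v)
      by_cases hXA : X = A
      · exact ⟨A ∪ B, mem_insert_self _ _, mem_union_left _ (hXA ▸ hvX)⟩
      by_cases hXB : X = B
      · exact ⟨A ∪ B, mem_insert_self _ _, mem_union_right _ (hXB ▸ hvX)⟩
      · refine ⟨X, mem_insert_of_mem ?_, hvX⟩
        exact Finset.mem_erase.2 ⟨hXB, Finset.mem_erase.2 ⟨hXA, hXp⟩⟩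
  bot_notMem := by
    simp only [Finset.bot_eq_empty, mem_insert, Finset.mem_erase]
    rintro (hc | ⟨-, -, hc⟩)
    · have h5 : A = ∅ := by
        have h6 := hc.symm
        rw [Finset.union_eq_empty] at h6
        exact h6.1
      exact (P.nonempty_of_mem_parts hA).ne_empty h5
    · exact P.bot_notMem (by simpa using hc)

lemma mergeP_mergeStep (hA : A ∈ P.parts) (hB : B ∈ P.parts) (hAB : A ≠ B) :
    MergeStep P (mergeP P hA hB hAB) :=
  ⟨A, hA, B, hB, hAB, rfl⟩

lemma mergeP_parts (hA : A ∈ P.parts) (hB : B ∈ P.parts) (hAB : A ≠ B) :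
    (mergeP P hA hB hAB).parts = insert (A ∪ B) ((P.parts.erase A).erase B) := rfl

lemma mergeP_parts_card (hA : A ∈ P.parts) (hB : B ∈ P.parts) (hAB : A ≠ B) :
    (mergeP P hA hB hAB).parts.card < P.parts.card := by
  rw [mergeP_parts]
  have hUB : A ∪ B ∉ (P.parts.erase A).erase B := by
    intro hc
    exact union_not_mem P hA hB hAB (Finset.mem_of_mem_erase (Finset.mem_of_mem_erase hc))
  rw [Finset.card_insert_of_notMem hUB]
  have hBA : B ∈ P.parts.erase A := Finset.mem_erase.2 ⟨fun e => hAB e.symm, hB⟩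
  rw [Finset.card_erase_of_mem hBA, Finset.card_erase_of_mem hA]
  have h2 : 2 ≤ P.parts.card := Finset.one_lt_card.2 ⟨A, hA, B, hB, hAB⟩
  omega

/-- Membership in merged partition. -/
lemma mem_mergeP (hA : A ∈ P.parts) (hB : B ∈ P.parts) (hAB : A ≠ B) {X : Finset V} :
    X ∈ (mergeP P hA hB hAB).parts ↔ X = A ∪ B ∨ (X ≠ A ∧ X ≠ B ∧ X ∈ P.parts) := by
  rw [mergeP_parts]
  simp only [mem_insert, Finset.mem_erase]
  tauto

lemma filter_mergeP_card_le (hA : A ∈ P.parts) (hB : B ∈ P.parts) (hAB : A ≠ B)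
    (pred : Finset V → Prop) [DecidablePred pred]
    (hpredU : pred (A ∪ B) → (pred A ∧ pred B)) :
    ((mergeP P hA hB hAB).parts.filter pred).card ≤ (P.parts.filter pred).card := by
  rw [mergeP_parts]
  have hUB : A ∪ B ∉ (P.parts.erase A).erase B := fun hc =>
    union_not_mem P hA hB hAB (Finset.mem_of_mem_erase (Finset.mem_of_mem_erase hc))
  rw [Finset.filter_insert]
  have hsub : ((P.parts.erase A).erase B).filter pred ⊆ P.parts.filter pred := by
    intro X hX
    rw [Finset.mem_filter] at hX ⊢
    exact ⟨Finset.mem_of_mem_erase (Finset.mem_of_mem_erase hX.1), hX.2⟩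
  by_cases hU : pred (A ∪ B)
  · rw [if_pos hU]
    obtain ⟨hpA, hpB⟩ := hpredU hU
    have hAf : A ∈ P.parts.filter pred := Finset.mem_filter.2 ⟨hA, hpA⟩
    have hBf : B ∈ (P.parts.filter pred).erase A :=
      Finset.mem_erase.2 ⟨fun e => hAB e.symm, Finset.mem_filter.2 ⟨hB, hpB⟩⟩
    have hcard2 : 2 ≤ (P.parts.filter pred).card :=
      Finset.one_lt_card.2 ⟨A, hAf, B, Finset.mem_of_mem_erase hBf, hAB⟩
    have hUBf : A ∪ B ∉ ((P.parts.erase A).erase B).filter pred :=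
      fun hc => hUB (Finset.mem_of_mem_filter _ hc)
    rw [Finset.card_insert_of_notMem hUBf]
    rw [Finset.filter_erase, Finset.filter_erase]
    rw [Finset.card_erase_of_mem hBf, Finset.card_erase_of_mem hAf]
    omega
  · rw [if_neg hU]
    exact Finset.card_le_card hsub

end Dev

end Dev

section DevMatrix

open Dev

variable {n k : ℕ} {M : Fin n → Fin n → Bool}

namespace Dev

/-- The image of rows under restriction outside a larger set is at most as rich. -/
lemma card_image_rowRestr_le (M : Fin n → Fin n → Bool) (S : Finset (Fin n))
    {U U' : Finset (Fin n)} (hU : U ⊆ U') :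
    (S.image (rowRestr M U')).card ≤ (S.image (rowRestr M U)).card := by
  have hEq : S.image (rowRestr M U') =
      (S.image (rowRestr M U)).image (fun f c => if c ∈ U' then none else f c) := by
    rw [Finset.image_image]
    apply Finset.image_congr
    intro r _
    funext c
    simp only [Function.comp_apply, rowRestr]
    by_cases hc : c ∈ U'
    · simp [hc]
    · have hcU : c ∉ U := fun h => hc (hU h)
      simp [hc, hcU]
  rw [hEq]
  exact Finset.card_image_le

lemma card_image_rowRestr_mono (M : Fin n → Fin n → Bool) {S T : Finset (Fin n)}
    (U : Finset (Fin n)) (hST : S ⊆ T) :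
    (S.image (rowRestr M U)).card ≤ (T.image (rowRestr M U)).card :=
  Finset.card_le_card (Finset.image_subset_image hST)

/-- A configuration: a partition refining an interval division (given by a monotone
position function), where each part sits inside one interval, parts of an interval
are few, rows inside a part agree far from the interval, and each pair of adjacent
fibers has few row classes relative to a big window. -/
structure Cfg (n k : ℕ) (M : Fin n → Fin n → Bool) where
  pos : Fin n → ℤ
  p : ℕ
  P : Finpartition (Finset.univ : Finset (Fin n))
  hp : 1 ≤ p
  mono : Monotone pos
  pos_lb : ∀ v, 1 ≤ pos v
  pos_ub : ∀ v, pos v ≤ (p : ℤ)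
  surj : ∀ j : ℤ, 1 ≤ j → j ≤ (p : ℤ) → ∃ v, pos v = j
  sub : ∀ K ∈ P.parts, ∀ a ∈ K, ∀ b ∈ K, pos a = pos b
  cnt : ∀ j : ℤ, ((P.parts.filter fun K => ∃ v ∈ K, pos v = j)).card ≤ 2 * k - 2
  cls : ∀ K ∈ P.parts, ∀ r ∈ K, ∀ r' ∈ K, ∀ c : Fin n,
      (∀ v ∈ K, pos c < pos v - 4 * k ∨ pos v + 4 * k < pos c) → M r c = M r' c
  wcls : ∀ j : ℤ,
      (((Finset.univ.filter fun v => pos v = j)).image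
        (rowRestr M (Finset.univ.filter fun c =>
          j - 4 * k ≤ pos c ∧ pos c ≤ j + 4 * k))).card ≤ k - 1

/-- L1: stretch bound for a configuration. -/
lemma stretch_le (hM : ∀ i j, M i j = M j i) (C : Cfg n k M) :
    matStretch M C.P ≤ (8 * k + 1) * (2 * k - 2) := by
  apply Finset.sup_le
  intro R hR
  obtain ⟨v₀, hv₀⟩ := C.P.nonempty_of_mem_parts hR
  set m : ℤ := C.pos v₀ with hm
  set S : Finset (Fin n) :=
    Finset.univ.filter fun v => m - 4 * k ≤ C.pos v ∧ C.pos v ≤ m + 4 * k with hS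
  -- Step 1: the bag is inside S
  have hbag : matBag M C.P R ⊆ S := by
    intro x hx
    rw [matBag, Finset.mem_union] at hx
    rcases hx with hx | hx
    · have := C.sub R hR x hx v₀ hv₀
      simp only [hS, Finset.mem_filter, Finset.mem_univ, true_and]
      constructor <;> [skip; skip] <;> rw [this] <;> omega
    · rw [Finset.mem_biUnion] at hx
      obtain ⟨Q, hQ, hxQ⟩ := hx
      rw [Finset.mem_filter] at hQ
      obtain ⟨hQp, hQnc⟩ := hQ
      simp only [id] at hxQ
      -- show Q ⊆ S
      by_contra hxS
      simp only [hS, Finset.mem_filter, Finset.mem_univ, true_and, not_and, not_le] at hxS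
      have hfar : C.pos x < m - 4 * k ∨ m + 4 * k < C.pos x := by
        by_cases h1 : m - 4 * k ≤ C.pos x
        · exact Or.inr (hxS h1)
        · exact Or.inl (by omega)
      -- all of Q has the far position of x
      have hQpos : ∀ y ∈ Q, C.pos y = C.pos x := fun y hy => C.sub Q hQp y hy x hxQ
      -- show the zone is constant, contradiction
      obtain ⟨r, hr, r', hr', c, hc, c', hc', hne⟩ := hQnc
      apply hne
      have e1 : M r c = M r' c := by
        apply C.cls R hR r hr r' hr' c
        intro v hv
        have h1 := C.sub R hR v hv v₀ hv₀
        have h2 := hQpos c hc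
        rw [h1, h2]
        omega
      have e2 : M r' c = M r' c' := by
        have s1 : M r' c = M c r' := hM r' c
        have s2 : M r' c' = M c' r' := hM r' c'
        rw [s1, s2]
        apply C.cls Q hQp c hc c' hc' r'
        intro v hv
        have h1 := C.sub R hR r' hr' v₀ hv₀
        have h2 := hQpos v hv
        rw [h1, h2]
        omega
      rw [e1, e2]
  -- Step 2: conv of the bag is inside S
  have hconv : conv (matBag M C.P R) ⊆ S := by
    intro x hx
    simp only [conv, Finset.mem_filter] at hx
    obtain ⟨-, ⟨a, ha, hax⟩, b, hb, hxb⟩ := hx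
    have hSa := hbag ha
    have hSb := hbag hb
    simp only [hS, Finset.mem_filter, Finset.mem_univ, true_and] at hSa hSb ⊢
    have m1 := C.mono hax
    have m2 := C.mono hxb
    omega
  -- Step 3: counting
  rw [matStretchPart]
  calc (C.P.parts.filter fun Q => Conflict Q (matBag M C.P R)).card
      ≤ ((Finset.Icc (m - 4*k) (m + 4*k)).biUnion
          (fun j => C.P.parts.filter fun Q => ∃ v ∈ Q, C.pos v = j)).card := by
        apply Finset.card_le_card
        intro Q hQ
        rw [Finset.mem_filter] at hQ
        obtain ⟨hQp, x, hx⟩ := hQ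
        rw [Finset.mem_inter] at hx
        obtain ⟨hxQ, hxB⟩ := hx
        simp only [conv, Finset.mem_filter] at hxQ
        obtain ⟨-, ⟨a, ha, hax⟩, b, hb, hxb⟩ := hxQ
        have hab := C.sub Q hQp a ha b hb
        have hpa : C.pos a = C.pos x :=
          le_antisymm (C.mono hax) (by rw [hab]; exact C.mono hxb)
        have hxS := hconv hxB
        simp only [hS, Finset.mem_filter, Finset.mem_univ, true_and] at hxS
        rw [Finset.mem_biUnion]
        refine ⟨C.pos a, ?_, ?_⟩
        · rw [Finset.mem_Icc]; omega
        · rw [Finset.mem_filter]; exact ⟨hQp, a, ha, rfl⟩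
    _ ≤ ∑ j ∈ Finset.Icc (m - 4*k) (m + 4*k),
          (C.P.parts.filter fun Q => ∃ v ∈ Q, C.pos v = j).card :=
        Finset.card_biUnion_le
    _ ≤ (Finset.Icc (m - 4*k) (m + 4*k)).card • (2 * k - 2) :=
        Finset.sum_le_card_nsmul _ _ _ (fun j _ => C.cnt j)
    _ = (8 * k + 1) * (2 * k - 2) := by
        rw [Int.card_Icc, smul_eq_mul]
        congr 1
        omega

set_option maxHeartbeats 1000000 in
/-- L2: merging two compatible parts in the same fiber. -/
def mergeCfg (C : Cfg n k M) {K1 K2 : Finset (Fin n)}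
    (hK1 : K1 ∈ C.P.parts) (hK2 : K2 ∈ C.P.parts) (hne : K1 ≠ K2)
    (hfib : ∀ a ∈ K1 ∪ K2, ∀ b ∈ K1 ∪ K2, C.pos a = C.pos b)
    (hcomp : ∀ r ∈ K1 ∪ K2, ∀ r' ∈ K1 ∪ K2, ∀ c : Fin n,
      (∀ v ∈ K1 ∪ K2, C.pos c < C.pos v - 4 * k ∨ C.pos v + 4 * k < C.pos c) →
      M r c = M r' c) :
    Cfg n k M where
  pos := C.pos
  p := C.p
  P := mergeP C.P hK1 hK2 hne
  hp := C.hp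
  mono := C.mono
  pos_lb := C.pos_lb
  pos_ub := C.pos_ub
  surj := C.surj
  sub := by
    intro X hX a ha b hb
    rw [mem_mergeP] at hX
    rcases hX with rfl | ⟨-, -, hX⟩
    · exact hfib a ha b hb
    · exact C.sub X hX a ha b hb
  cnt := by
    intro j
    refine le_trans (filter_mergeP_card_le C.P hK1 hK2 hne (fun K => ∃ v ∈ K, C.pos v = j) ?_) (C.cnt j)
    rintro ⟨v, hv, hvj⟩
    constructor
    · obtain ⟨a, ha⟩ := C.P.nonempty_of_mem_parts hK1
      exact ⟨a, ha, by rw [hfib a (Finset.mem_union_left _ ha) v hv]; exact hvj⟩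
    · obtain ⟨b, hb⟩ := C.P.nonempty_of_mem_parts hK2
      exact ⟨b, hb, by rw [hfib b (Finset.mem_union_right _ hb) v hv]; exact hvj⟩
  cls := by
    intro X hX r hr r' hr' c hc
    rw [mem_mergeP] at hX
    rcases hX with rfl | ⟨-, -, hX⟩
    · exact hcomp r hr r' hr' c hc
    · exact C.cls X hX r hr r' hr' c hc
  wcls := C.wcls

lemma mergeCfg_P (C : Cfg n k M) {K1 K2 : Finset (Fin n)}
    (hK1 : K1 ∈ C.P.parts) (hK2 : K2 ∈ C.P.parts) (hne : K1 ≠ K2) (hfib) (hcomp) :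
    (mergeCfg C hK1 hK2 hne hfib hcomp).P = mergeP C.P hK1 hK2 hne := rfl

/-- Mergeability of position `m` with `m+1`. -/
def Mergeable (C : Cfg n k M) (m : ℤ) : Prop :=
  (((Finset.univ.filter fun v => C.pos v = m ∨ C.pos v = m + 1)).image
     (rowRestr M (Finset.univ.filter fun c =>
       m - 4 * k ≤ C.pos c ∧ C.pos c ≤ m + 4 * k + 1))).card ≤ k - 1

/-- The pairing division associated to a configuration. -/
def pairDiv (C : Cfg n k M) (hp : 4 * k + 2 ≤ C.p) (hk : 2 ≤ k) : SymDiv n where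
  p := C.p / 2
  I := fun j => Finset.univ.filter fun c => 1 ≤ j ∧ j ≤ ((C.p / 2 : ℕ) : ℤ) ∧
        2 * j - 1 ≤ C.pos c ∧ C.pos c ≤ (if j = ((C.p / 2 : ℕ) : ℤ) then (C.p : ℤ) else 2 * j)
  out_empty := by
    intro j hj
    rw [Finset.filter_eq_empty_iff]
    rintro c - ⟨h1, h2, -⟩
    rcases hj with hj | hj <;> omega
  in_nonempty := by
    intro j hj1 hj2
    have h2q : 2 * (C.p / 2) ≤ C.p := by omega
    obtain ⟨v, hv⟩ := C.surj (2 * j - 1) (by omega) (by omega)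
    refine ⟨v, ?_⟩
    simp only [Finset.mem_filter, Finset.mem_univ, true_and]
    refine ⟨hj1, hj2, by omega, ?_⟩
    by_cases hjq : j = ((C.p / 2 : ℕ) : ℤ)
    · rw [if_pos hjq]; omega
    · rw [if_neg hjq]; omega
  interval := by
    intro j a ha c hc b hab hbc
    simp only [Finset.mem_filter, Finset.mem_univ, true_and] at ha hc ⊢
    have m1 := C.mono hab
    have m2 := C.mono hbc
    by_cases hjq : j = ((C.p / 2 : ℕ) : ℤ) <;>
      [rw [if_pos hjq] at ha hc ⊢; rw [if_neg hjq] at ha hc ⊢] <;>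
      exact ⟨ha.1, ha.2.1, by omega, by omega⟩
  increasing := by
    intro j a ha b hb
    simp only [Finset.mem_filter, Finset.mem_univ, true_and] at ha hb
    have hjq : j ≠ ((C.p / 2 : ℕ) : ℤ) := by omega
    rw [if_neg hjq] at ha
    have hlt : C.pos a < C.pos b := by omega
    by_contra hab
    have : b ≤ a := le_of_not_gt hab
    exact absurd (C.mono this) (by omega)
  covers := by
    intro v
    have hx1 := C.pos_lb v
    have hx2 := C.pos_ub v
    have h2q : 2 * (C.p / 2) ≤ C.p ∧ C.p ≤ 2 * (C.p / 2) + 1 := by omega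
    by_cases hbig : 2 * ((C.p / 2 : ℕ) : ℤ) - 1 ≤ C.pos v
    · refine ⟨((C.p / 2 : ℕ) : ℤ), ?_⟩
      simp only [Finset.mem_filter, Finset.mem_univ, true_and, if_true]
      omega
    · rcases Int.even_or_odd (C.pos v) with ⟨t, ht⟩ | ⟨t, ht⟩
      · refine ⟨t, ?_⟩
        simp only [Finset.mem_filter, Finset.mem_univ, true_and]
        have hne : t ≠ ((C.p / 2 : ℕ) : ℤ) := by omega
        rw [if_neg hne]
        omega
      · refine ⟨t + 1, ?_⟩
        simp only [Finset.mem_filter, Finset.mem_univ, true_and]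
        have hne : t + 1 ≠ ((C.p / 2 : ℕ) : ℤ) := by omega
        rw [if_neg hne]
        omega

lemma pairDiv_p (C : Cfg n k M) (hp : 4 * k + 2 ≤ C.p) (hk : 2 ≤ k) :
    (pairDiv C hp hk).p = C.p / 2 := rfl

lemma pairDiv_I (C : Cfg n k M) (hp : 4 * k + 2 ≤ C.p) (hk : 2 ≤ k) (j : ℤ) :
    (pairDiv C hp hk).I j = Finset.univ.filter fun c => 1 ≤ j ∧ j ≤ ((C.p / 2 : ℕ) : ℤ) ∧
      2 * j - 1 ≤ C.pos c ∧ C.pos c ≤ (if j = ((C.p / 2 : ℕ) : ℤ) then (C.p : ℤ) else 2 * j) :=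
  rfl

/-- If no merge position works, the pairing division is `k`-wide. -/
lemma pairDiv_wide (C : Cfg n k M) (hp : 4 * k + 2 ≤ C.p) (hk : 2 ≤ k)
    (hno : ∀ m : ℤ, 1 ≤ m → m ≤ (C.p : ℤ) - 1 →
      k ≤ (((Finset.univ.filter fun v => C.pos v = m ∨ C.pos v = m + 1)).image
        (rowRestr M (Finset.univ.filter fun c =>
          m - 4 * k ≤ C.pos c ∧ C.pos c ≤ m + 4 * k + 1))).card) :
    WideDiv M (pairDiv C hp hk) k := by
  intro i hi1 hi2
  rw [pairDiv_p] at hi2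
  intro j₀ hj₀1 hj₀2
  have h2q : 2 * (C.p / 2) ≤ C.p ∧ C.p ≤ 2 * (C.p / 2) + 1 := by omega
  set q : ℤ := ((C.p / 2 : ℕ) : ℤ) with hqdef
  set m : ℤ := if i = q then (C.p : ℤ) - 1 else 2 * i - 1 with hmdef
  have hm1 : 1 ≤ m ∧ m ≤ (C.p : ℤ) - 1 := by
    by_cases hiq : i = q <;> [rw [hmdef, if_pos hiq]; rw [hmdef, if_neg hiq]] <;> omega
  have hobs := hno m hm1.1 hm1.2
  -- the pair fiber is inside the part `I i`
  have ha : (Finset.univ.filter fun v => C.pos v = m ∨ C.pos v = m + 1) ⊆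
      (pairDiv C hp hk).I i := by
    intro v hv
    rw [Finset.mem_filter] at hv
    rw [pairDiv_I, Finset.mem_filter]
    refine ⟨Finset.mem_univ _, hi1, hi2, ?_, ?_⟩
    · by_cases hiq : i = q <;> [rw [hmdef, if_pos hiq] at hv; rw [hmdef, if_neg hiq] at hv] <;>
        omega
    · by_cases hiq : i = q <;>
        [(rw [if_pos hiq]; rw [hmdef, if_pos hiq] at hv); (rw [if_neg hiq]; rw [hmdef, if_neg hiq] at hv)] <;>
        omega
  -- the window is inside the big window around `m`
  have hb : window (pairDiv C hp hk) j₀ k ⊆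
      (Finset.univ.filter fun c => m - 4 * k ≤ C.pos c ∧ C.pos c ≤ m + 4 * k + 1) := by
    intro c hc
    rw [window, Finset.mem_biUnion] at hc
    obtain ⟨u, hu, hcu⟩ := hc
    rw [Finset.mem_Icc] at hu
    rw [pairDiv_I, Finset.mem_filter] at hcu
    obtain ⟨-, hu1, hu2, hc1, hc2⟩ := hcu
    rw [Finset.mem_filter]
    refine ⟨Finset.mem_univ _, ?_, ?_⟩ <;>
      by_cases huq : u = q <;> by_cases hiq : i = q <;>
      simp only [huq, hiq, if_pos rfl, if_true, if_neg, if_false] at hc2 hmdef ⊢ <;>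
      first
        | omega
        | (rw [if_neg huq] at hc2; rw [hmdef]; omega)
        | (rw [if_pos huq] at hc2; rw [hmdef]; omega)
        | (rw [if_neg huq] at hc2; omega)
        | (rw [if_pos huq] at hc2; omega)
  calc (k : ℕ)
      ≤ (((Finset.univ.filter fun v => C.pos v = m ∨ C.pos v = m + 1)).image
          (rowRestr M (Finset.univ.filter fun c =>
            m - 4 * k ≤ C.pos c ∧ C.pos c ≤ m + 4 * k + 1))).card := hobs
    _ ≤ (((Finset.univ.filter fun v => C.pos v = m ∨ C.pos v = m + 1)).image
          (rowRestr M (window (pairDiv C hp hk) j₀ k))).card :=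
        card_image_rowRestr_le M _ hb
    _ ≤ (((pairDiv C hp hk).I i).image
          (rowRestr M (window (pairDiv C hp hk) j₀ k))).card :=
        card_image_rowRestr_mono M _ ha

/-- L3: some merge position works. -/
lemma exists_mergeable (hk : 2 ≤ k) (h : ¬ ∃ D : SymDiv n, WideDiv M D k)
    (C : Cfg n k M) (hp2 : 2 ≤ C.p) :
    ∃ m : ℤ, 1 ≤ m ∧ m ≤ (C.p : ℤ) - 1 ∧ Mergeable C m := by
  by_cases hsmall : C.p ≤ 4 * k + 1
  · refine ⟨1, le_refl _, by omega, ?_⟩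
    rw [Mergeable]
    have hWuniv : (Finset.univ.filter fun c : Fin n =>
        (1:ℤ) - 4 * k ≤ C.pos c ∧ C.pos c ≤ 1 + 4 * k + 1) = Finset.univ := by
      apply Finset.filter_true_of_mem
      intro c _
      have h1 := C.pos_lb c
      have h2 := C.pos_ub c
      omega
    rw [hWuniv]
    have himg : ∀ f ∈ (Finset.univ.filter fun v => C.pos v = 1 ∨ C.pos v = 1 + 1).image
        (rowRestr M Finset.univ), f = fun _ => none := by
      intro f hf
      rw [Finset.mem_image] at hf
      obtain ⟨r, -, rfl⟩ := hf
      funext c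
      simp [rowRestr]
    have : ((Finset.univ.filter fun v => C.pos v = 1 ∨ C.pos v = 1 + 1)).image
        (rowRestr M Finset.univ) ⊆ {fun _ => none} := by
      intro f hf
      rw [Finset.mem_singleton]
      exact himg f hf
    calc (((Finset.univ.filter fun v => C.pos v = 1 ∨ C.pos v = 1 + 1)).image
        (rowRestr M Finset.univ)).card ≤ 1 := by
          simpa using Finset.card_le_card this
      _ ≤ k - 1 := by omega
  · push_neg at hsmall
    by_contra hno
    push_neg at hno
    refine h ⟨pairDiv C (by omega) hk, pairDiv_wide C (by omega) hk ?_⟩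
    intro m hm1 hm2
    have := hno m hm1 hm2
    rw [Mergeable] at this
    omega

/-- collapsed position function -/
def cpos (C : Cfg n k M) (m : ℤ) : Fin n → ℤ :=
  fun v => if C.pos v ≤ m then C.pos v else C.pos v - 1

lemma cpos_spec (C : Cfg n k M) (m : ℤ) (v : Fin n) :
    (C.pos v ≤ m ∧ cpos C m v = C.pos v) ∨ (m < C.pos v ∧ cpos C m v = C.pos v - 1) := by
  rw [cpos]
  by_cases h : C.pos v ≤ m
  · exact Or.inl ⟨h, if_pos h⟩
  · exact Or.inr ⟨by omega, if_neg h⟩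

/-- L2.5: collapsing the frame at a mergeable position. -/
def collapseCfg (C : Cfg n k M) (m : ℤ) (hm1 : 1 ≤ m) (hm2 : m ≤ (C.p : ℤ) - 1)
    (hmer : Mergeable C m)
    (hall : ∀ j : ℤ, ((C.P.parts.filter fun K => ∃ v ∈ K, C.pos v = j)).card ≤ k - 1) :
    Cfg n k M where
  pos := cpos C m
  p := C.p - 1
  P := C.P
  hp := by omega
  mono := by
    intro a b hab
    have := C.mono hab
    rcases cpos_spec C m a with ⟨h1, e1⟩ | ⟨h1, e1⟩ <;>
      rcases cpos_spec C m b with ⟨h2, e2⟩ | ⟨h2, e2⟩ <;> rw [e1, e2] <;> omega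
  pos_lb := by
    intro v
    have := C.pos_lb v
    rcases cpos_spec C m v with ⟨h1, e1⟩ | ⟨h1, e1⟩ <;> rw [e1] <;> omega
  pos_ub := by
    intro v
    have := C.pos_ub v
    have hc : ((C.p - 1 : ℕ) : ℤ) = (C.p : ℤ) - 1 := by omega
    rcases cpos_spec C m v with ⟨h1, e1⟩ | ⟨h1, e1⟩ <;> rw [e1, hc] <;> omega
  surj := by
    intro j hj1 hj2
    have hc : ((C.p - 1 : ℕ) : ℤ) = (C.p : ℤ) - 1 := by omega
    rw [hc] at hj2
    by_cases hjm : j ≤ m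
    · obtain ⟨v, hv⟩ := C.surj j hj1 (by omega)
      refine ⟨v, ?_⟩
      rcases cpos_spec C m v with ⟨h1, e1⟩ | ⟨h1, e1⟩ <;> omega
    · obtain ⟨v, hv⟩ := C.surj (j + 1) (by omega) (by omega)
      refine ⟨v, ?_⟩
      rcases cpos_spec C m v with ⟨h1, e1⟩ | ⟨h1, e1⟩ <;> omega
  sub := by
    intro K hK a ha b hb
    have := C.sub K hK a ha b hb
    rcases cpos_spec C m a with ⟨h1, e1⟩ | ⟨h1, e1⟩ <;>
      rcases cpos_spec C m b with ⟨h2, e2⟩ | ⟨h2, e2⟩ <;> omega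
  cnt := by
    intro j
    have hsub : (C.P.parts.filter fun K => ∃ v ∈ K, cpos C m v = j) ⊆
        (C.P.parts.filter fun K => ∃ v ∈ K, C.pos v = j) ∪
        (C.P.parts.filter fun K => ∃ v ∈ K, C.pos v = j + 1) := by
      intro K hK
      rw [Finset.mem_filter] at hK
      obtain ⟨hKp, v, hv, hvj⟩ := hK
      rw [Finset.mem_union, Finset.mem_filter, Finset.mem_filter]
      rcases cpos_spec C m v with ⟨h1, e1⟩ | ⟨h1, e1⟩
      · exact Or.inl ⟨hKp, v, hv, by omega⟩
      · exact Or.inr ⟨hKp, v, hv, by omega⟩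
    have h1 := hall j
    have h2 := hall (j + 1)
    have h3 := Finset.card_union_le
      (C.P.parts.filter fun K => ∃ v ∈ K, C.pos v = j)
      (C.P.parts.filter fun K => ∃ v ∈ K, C.pos v = j + 1)
    have h4 := Finset.card_le_card hsub
    omega
  cls := by
    intro K hK r hr r' hr' c hc
    apply C.cls K hK r hr r' hr' c
    intro v hv
    have h := hc v hv
    rcases cpos_spec C m c with ⟨h1, e1⟩ | ⟨h1, e1⟩ <;>
      rcases cpos_spec C m v with ⟨h2, e2⟩ | ⟨h2, e2⟩ <;> omega
  wcls := by
    intro j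
    by_cases hjm : j = m
    · have hfib : (Finset.univ.filter fun v => cpos C m v = j) =
          (Finset.univ.filter fun v => C.pos v = m ∨ C.pos v = m + 1) := by
        ext v
        simp only [Finset.mem_filter, Finset.mem_univ, true_and]
        have hub := C.pos_ub v
        have hlb := C.pos_lb v
        rcases cpos_spec C m v with ⟨h1, e1⟩ | ⟨h1, e1⟩ <;> constructor <;> intro hq <;> omega
      have hwin : (Finset.univ.filter fun c => j - 4 * k ≤ cpos C m c ∧ cpos C m c ≤ j + 4 * k) =
          (Finset.univ.filter fun c => m - 4 * k ≤ C.pos c ∧ C.pos c ≤ m + 4 * k + 1) := by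
        ext c
        simp only [Finset.mem_filter, Finset.mem_univ, true_and]
        rcases cpos_spec C m c with ⟨h1, e1⟩ | ⟨h1, e1⟩ <;> constructor <;> intro hq <;>
          exact ⟨by omega, by omega⟩
      rw [hfib, hwin]
      exact hmer
    · set j' : ℤ := if j < m then j else j + 1 with hj'
      have hj'cases : (j < m ∧ j' = j) ∨ (m < j ∧ j' = j + 1) := by
        by_cases hlt : j < m
        · exact Or.inl ⟨hlt, if_pos hlt⟩
        · exact Or.inr ⟨by omega, if_neg hlt⟩
      have hfib : (Finset.univ.filter fun v => cpos C m v = j) =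
          (Finset.univ.filter fun v => C.pos v = j') := by
        ext v
        simp only [Finset.mem_filter, Finset.mem_univ, true_and]
        rcases cpos_spec C m v with ⟨h1, e1⟩ | ⟨h1, e1⟩ <;> rcases hj'cases with ⟨h2, e2⟩ | ⟨h2, e2⟩ <;>
          constructor <;> intro hq <;> omega
      have hwin : (Finset.univ.filter fun c => j' - 4 * k ≤ C.pos c ∧ C.pos c ≤ j' + 4 * k) ⊆
          (Finset.univ.filter fun c => j - 4 * k ≤ cpos C m c ∧ cpos C m c ≤ j + 4 * k) := by
        intro c hc
        rw [Finset.mem_filter] at hc ⊢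
        refine ⟨Finset.mem_univ _, ?_⟩
        obtain ⟨-, hc1, hc2⟩ := hc
        rcases cpos_spec C m c with ⟨h1, e1⟩ | ⟨h1, e1⟩ <;> rcases hj'cases with ⟨h2, e2⟩ | ⟨h2, e2⟩ <;>
          constructor <;> omega
      rw [hfib]
      exact le_trans (card_image_rowRestr_le M _ hwin) (C.wcls j')

lemma collapseCfg_P (C : Cfg n k M) (m : ℤ) (hm1) (hm2) (hmer) (hall) :
    (collapseCfg C m hm1 hm2 hmer hall).P = C.P := rfl

lemma collapseCfg_p (C : Cfg n k M) (m : ℤ) (hm1) (hm2) (hmer) (hall) :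
    (collapseCfg C m hm1 hm2 hmer hall).p = C.p - 1 := rfl

/-- The key induction: build a merge sequence from a configuration down to the
trivial partition, keeping stretch small. -/
lemma buildSeq (hM : ∀ i j, M i j = M j i) (hk : 2 ≤ k)
    (h : ¬ ∃ D : SymDiv n, WideDiv M D k) :
    ∀ (N : ℕ) (C : Cfg n k M), 2 * C.P.parts.card + C.p ≤ N →
    ∃ l : List (Finpartition (Finset.univ : Finset (Fin n))),
      l.head? = some C.P ∧
      (∃ Pl, l.getLast? = some Pl ∧ Pl.parts = {Finset.univ}) ∧
      l.Chain' MergeStep ∧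
      ∀ P' ∈ l, matStretch M P' ≤ (8 * k + 1) * (2 * k - 2) := by
  intro N
  induction N with
  | zero => intro C hC; exfalso; have := C.hp; omega
  | succ N ih =>
    intro C hC
    -- the partition is nonempty
    have hvex : ∃ v : Fin n, True := by
      obtain ⟨v, -⟩ := C.surj 1 le_rfl (by exact_mod_cast C.hp)
      exact ⟨v, trivial⟩
    obtain ⟨v₀, -⟩ := hvex
    have hc1 : 1 ≤ C.P.parts.card := by
      obtain ⟨X, hX, -⟩ := C.P.exists_mem (a := v₀) (Finset.mem_univ v₀)
      exact Finset.card_pos.2 ⟨X, hX⟩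
    by_cases hbase : C.P.parts.card = 1
    · -- base case: single part, which must be univ
      obtain ⟨X, hX⟩ := Finset.card_eq_one.1 hbase
      have hXuniv : X = Finset.univ := by
        have hs := C.P.sup_parts
        rw [hX, Finset.sup_singleton] at hs
        exact hs
      refine ⟨[C.P], rfl, ⟨C.P, rfl, by rw [hX, hXuniv]⟩, List.isChain_singleton _, ?_⟩
      intro P' hP'
      rw [List.mem_singleton] at hP'
      subst hP'
      exact stretch_le hM C
    · -- at least two parts
      have hc2 : 2 ≤ C.P.parts.card := by omega
      by_cases hbig : ∃ j : ℤ, k ≤ ((C.P.parts.filter fun K => ∃ v ∈ K, C.pos v = j)).card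
      · -- a fiber with many parts: merge two of them by pigeonhole
        obtain ⟨j, hj⟩ := hbig
        set Wj : Finset (Fin n) :=
          Finset.univ.filter (fun c => j - 4 * k ≤ C.pos c ∧ C.pos c ≤ j + 4 * k) with hWj
        set s := C.P.parts.filter (fun K => ∃ v ∈ K, C.pos v = j) with hs
        set t := (Finset.univ.filter fun v => C.pos v = j).image (rowRestr M Wj) with ht
        have htcard : t.card ≤ k - 1 := C.wcls j
        have hmap : ∀ K ∈ s, (if hK : K.Nonempty then rowRestr M Wj hK.choose
            else fun _ => none) ∈ t := by
          intro K hK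
          rw [hs, Finset.mem_filter] at hK
          obtain ⟨hKp, v, hv, hvj⟩ := hK
          have hne : K.Nonempty := ⟨v, hv⟩
          rw [dif_pos hne]
          have hch : hne.choose ∈ K := hne.choose_spec
          have hchj : C.pos hne.choose = j := by
            rw [C.sub K hKp hne.choose hch v hv]; exact hvj
          exact Finset.mem_image.2 ⟨hne.choose,
            Finset.mem_filter.2 ⟨Finset.mem_univ _, hchj⟩, rfl⟩
        obtain ⟨K1, hK1s, K2, hK2s, hne, hfeq⟩ :=
          Finset.exists_ne_map_eq_of_card_lt_of_maps_to (by omega) hmap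
        rw [hs, Finset.mem_filter] at hK1s hK2s
        obtain ⟨hK1p, v1, hv1, hv1j⟩ := hK1s
        obtain ⟨hK2p, v2, hv2, hv2j⟩ := hK2s
        have hne1 : K1.Nonempty := ⟨v1, hv1⟩
        have hne2 : K2.Nonempty := ⟨v2, hv2⟩
        rw [dif_pos hne1, dif_pos hne2] at hfeq
        have hposU : ∀ x ∈ K1 ∪ K2, C.pos x = j := by
          intro x hx
          rcases Finset.mem_union.1 hx with hx | hx
          · rw [C.sub K1 hK1p x hx v1 hv1]; exact hv1j
          · rw [C.sub K2 hK2p x hx v2 hv2]; exact hv2j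
        have hfibU : ∀ a ∈ K1 ∪ K2, ∀ b ∈ K1 ∪ K2, C.pos a = C.pos b := by
          intro a ha b hb; rw [hposU a ha, hposU b hb]
        have hcomp : ∀ r ∈ K1 ∪ K2, ∀ r' ∈ K1 ∪ K2, ∀ c : Fin n,
            (∀ v ∈ K1 ∪ K2, C.pos c < C.pos v - 4 * k ∨ C.pos v + 4 * k < C.pos c) →
            M r c = M r' c := by
          intro r hr r' hr' c hc
          have hcW : c ∉ Wj := by
            intro hcmem
            rw [hWj, Finset.mem_filter] at hcmem
            have := hc v1 (Finset.mem_union_left _ hv1)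
            omega
          have hfar1 : ∀ v ∈ K1, C.pos c < C.pos v - 4 * k ∨ C.pos v + 4 * k < C.pos c :=
            fun v hv => hc v (Finset.mem_union_left _ hv)
          have hfar2 : ∀ v ∈ K2, C.pos c < C.pos v - 4 * k ∨ C.pos v + 4 * k < C.pos c :=
            fun v hv => hc v (Finset.mem_union_right _ hv)
          have hrep : M hne1.choose c = M hne2.choose c := by
            have := congr_fun hfeq c
            rw [rowRestr, rowRestr, if_neg hcW, if_neg hcW] at this
            exact Option.some.inj this
          have hin1 : ∀ x ∈ K1, M x c = M hne1.choose c :=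
            fun x hx => C.cls K1 hK1p x hx hne1.choose hne1.choose_spec c hfar1
          have hin2 : ∀ x ∈ K2, M x c = M hne2.choose c :=
            fun x hx => C.cls K2 hK2p x hx hne2.choose hne2.choose_spec c hfar2
          have hval : ∀ x ∈ K1 ∪ K2, M x c = M hne1.choose c := by
            intro x hx
            rcases Finset.mem_union.1 hx with hx | hx
            · exact hin1 x hx
            · rw [hin2 x hx]; exact hrep.symm
          rw [hval r hr, hval r' hr']
        set C' := mergeCfg C hK1p hK2p hne hfibU hcomp with hC'
        have hcard' : C'.P.parts.card < C.P.parts.card := mergeP_parts_card C.P hK1p hK2p hne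
        have e : C'.p = C.p := rfl
        have hmeas : 2 * C'.P.parts.card + C'.p ≤ N := by omega
        obtain ⟨l', h1', h2', h3', h4'⟩ := ih C' hmeas
        rcases l' with _ | ⟨a, tl⟩
        · simp at h1'
        · have ha : a = C'.P := by simpa using h1'
          refine ⟨C.P :: a :: tl, rfl, ?_, ?_, ?_⟩
          · obtain ⟨Pl, hPl1, hPl2⟩ := h2'
            exact ⟨Pl, by rw [List.getLast?_cons_cons]; exact hPl1, hPl2⟩
          · change List.IsChain MergeStep (C.P :: a :: tl); rw [List.isChain_cons_cons]
            refine ⟨?_, h3'⟩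
            rw [ha]
            exact mergeP_mergeStep C.P hK1p hK2p hne
          · intro P' hP'
            rcases List.mem_cons.1 hP' with rfl | hP'
            · exact stretch_le hM C
            · exact h4' P' hP'
      · -- all fibers small
        push_neg at hbig
        have hall : ∀ j : ℤ, ((C.P.parts.filter fun K => ∃ v ∈ K, C.pos v = j)).card ≤ k - 1 := by
          intro j
          have := hbig j
          omega
        by_cases hp2 : 2 ≤ C.p
        · -- collapse the frame
          obtain ⟨m, hm1, hm2, hmer⟩ := exists_mergeable hk h C hp2
          set C₂ := collapseCfg C m hm1 hm2 hmer hall with hC₂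
          have e1 : C₂.P.parts.card = C.P.parts.card := rfl
          have e2 : C₂.p = C.p - 1 := rfl
          have hmeas : 2 * C₂.P.parts.card + C₂.p ≤ N := by omega
          obtain ⟨l, h1, h2, h3, h4⟩ := ih C₂ hmeas
          exact ⟨l, h1, h2, h3, h4⟩
        · -- single interval: merge any two parts
          have hp1 : C.p = 1 := by have := C.hp; omega
          obtain ⟨K1, hK1p, K2, hK2p, hne⟩ :=
            (Finset.one_lt_card (s := C.P.parts)).1 (by omega)
          have hpos1 : ∀ x : Fin n, C.pos x = 1 := by
            intro x
            have h1 := C.pos_lb x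
            have h2 := C.pos_ub x
            rw [hp1] at h2
            omega
          have hfibU : ∀ a ∈ K1 ∪ K2, ∀ b ∈ K1 ∪ K2, C.pos a = C.pos b := by
            intro a _ b _; rw [hpos1 a, hpos1 b]
          have hcomp : ∀ r ∈ K1 ∪ K2, ∀ r' ∈ K1 ∪ K2, ∀ c : Fin n,
              (∀ v ∈ K1 ∪ K2, C.pos c < C.pos v - 4 * k ∨ C.pos v + 4 * k < C.pos c) →
              M r c = M r' c := by
            intro r hr r' hr' c hc
            exfalso
            have := hc r hr
            rw [hpos1 r, hpos1 c] at this
            omega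
          set C' := mergeCfg C hK1p hK2p hne hfibU hcomp with hC'
          have hcard' : C'.P.parts.card < C.P.parts.card := mergeP_parts_card C.P hK1p hK2p hne
          have e : C'.p = C.p := rfl
          have hmeas : 2 * C'.P.parts.card + C'.p ≤ N := by omega
          obtain ⟨l', h1', h2', h3', h4'⟩ := ih C' hmeas
          rcases l' with _ | ⟨a, tl⟩
          · simp at h1'
          · have ha : a = C'.P := by simpa using h1'
            refine ⟨C.P :: a :: tl, rfl, ?_, ?_, ?_⟩
            · obtain ⟨Pl, hPl1, hPl2⟩ := h2'
              exact ⟨Pl, by rw [List.getLast?_cons_cons]; exact hPl1, hPl2⟩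
            · change List.IsChain MergeStep (C.P :: a :: tl); rw [List.isChain_cons_cons]
              refine ⟨?_, h3'⟩
              rw [ha]
              exact mergeP_mergeStep C.P hK1p hK2p hne
            · intro P' hP'
              rcases List.mem_cons.1 hP' with rfl | hP'
              · exact stretch_le hM C
              · exact h4' P' hP'

/-- The initial configuration: singleton parts, singleton intervals. -/
def initCfg (n k : ℕ) (M : Fin n → Fin n → Bool) (hn : 1 ≤ n) (hk : 2 ≤ k) : Cfg n k M where
  pos := fun v => ((v : ℕ) : ℤ) + 1
  p := n
  P := ⊥
  hp := hn
  mono := by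
    intro a b hab
    have : (a : ℕ) ≤ (b : ℕ) := hab
    dsimp only
    omega
  pos_lb := by intro v; omega
  pos_ub := by
    intro v
    have := v.isLt
    omega
  surj := by
    intro j hj1 hj2
    have hlt : (j - 1).toNat < n := by omega
    refine ⟨⟨(j - 1).toNat, hlt⟩, ?_⟩
    dsimp only
    have e : ((⟨(j - 1).toNat, hlt⟩ : Fin n) : ℕ) = (j - 1).toNat := rfl
    omega
  sub := by
    intro K hK a ha b hb
    rw [Finpartition.parts_bot, Finset.mem_map] at hK
    obtain ⟨x, -, rfl⟩ := hK
    simp only [Function.Embedding.coeFn_mk, Finset.mem_singleton] at ha hb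
    rw [ha, hb]
  cnt := by
    intro j
    have h2 : (1:ℕ) ≤ 2 * k - 2 := by omega
    refine le_trans ?_ h2
    rw [Finset.card_le_one]
    intro K hK K' hK'
    rw [Finset.mem_filter] at hK hK'
    obtain ⟨hKp, v, hv, hvj⟩ := hK
    obtain ⟨hKp', v', hv', hvj'⟩ := hK'
    rw [Finpartition.parts_bot, Finset.mem_map] at hKp hKp'
    obtain ⟨x, -, rfl⟩ := hKp
    obtain ⟨x', -, rfl⟩ := hKp'
    simp only [Function.Embedding.coeFn_mk, Finset.mem_singleton] at hv hv' ⊢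
    subst hv; subst hv'
    have hvv : (v : ℕ) = (v' : ℕ) := by omega
    rw [Fin.ext hvv]
  cls := by
    intro K hK r hr r' hr' c hc
    rw [Finpartition.parts_bot, Finset.mem_map] at hK
    obtain ⟨x, -, rfl⟩ := hK
    simp only [Function.Embedding.coeFn_mk, Finset.mem_singleton] at hr hr'
    rw [hr, hr']
  wcls := by
    intro j
    have h1 : (Finset.univ.filter fun v : Fin n => ((v : ℕ) : ℤ) + 1 = j).card ≤ 1 := by
      rw [Finset.card_le_one]
      intro a ha b hb
      rw [Finset.mem_filter] at ha hb
      have : (a : ℕ) = (b : ℕ) := by omega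
      exact Fin.ext this
    calc ((Finset.univ.filter fun v : Fin n => ((v : ℕ) : ℤ) + 1 = j).image
        (rowRestr M (Finset.univ.filter fun c =>
          j - 4 * k ≤ ((c : ℕ) : ℤ) + 1 ∧ ((c : ℕ) : ℤ) + 1 ≤ j + 4 * k))).card
        ≤ (Finset.univ.filter fun v : Fin n => ((v : ℕ) : ℤ) + 1 = j).card :=
          Finset.card_image_le
      _ ≤ 1 := h1
      _ ≤ k - 1 := by omega

lemma initCfg_P (n k : ℕ) (M : Fin n → Fin n → Bool) (hn : 1 ≤ n) (hk : 2 ≤ k) :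
    (initCfg n k M hn hk).P = ⊥ := rfl

/-- The division of `[n]` into singletons. -/
def allDiv (n : ℕ) : SymDiv n where
  p := n
  I := fun j => Finset.univ.filter fun v => ((v : ℕ) : ℤ) + 1 = j
  out_empty := by
    intro j hj
    rw [Finset.filter_eq_empty_iff]
    intro v hv
    have hlt := v.isLt
    rcases hj with hj | hj <;> omega
  in_nonempty := by
    intro j hj1 hj2
    have hn : (0:ℤ) < (n:ℤ) := by omega
    have hlt : (j - 1).toNat < n := by omega
    refine ⟨⟨(j - 1).toNat, hlt⟩, ?_⟩
    rw [Finset.mem_filter]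
    refine ⟨Finset.mem_univ _, ?_⟩
    have e : ((⟨(j - 1).toNat, hlt⟩ : Fin n) : ℕ) = (j - 1).toNat := rfl
    omega
  interval := by
    intro j a ha c hc b hab hbc
    rw [Finset.mem_filter] at ha hc ⊢
    have hac : a = c := by
      have : (a : ℕ) = (c : ℕ) := by
        have h1 := ha.2; have h2 := hc.2; omega
      exact Fin.ext this
    have hba : b = a := le_antisymm (hac ▸ hbc) hab
    rw [hba]
    exact ha
  increasing := by
    intro j a ha b hb
    rw [Finset.mem_filter] at ha hb
    have h1 := ha.2
    have h2 := hb.2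
    rw [Fin.lt_def]
    omega
  covers := by
    intro v
    exact ⟨((v : ℕ) : ℤ) + 1, Finset.mem_filter.2 ⟨Finset.mem_univ _, rfl⟩⟩

lemma allDiv_wide_one {n : ℕ} (M : Fin n → Fin n → Bool) : WideDiv M (allDiv n) 1 := by
  intro i hi1 hi2 j hj1 hj2
  have hne : ((allDiv n).I i).Nonempty := (allDiv n).in_nonempty i hi1 hi2
  have : (((allDiv n).I i).image (rowRestr M (window (allDiv n) j 1))).Nonempty :=
    hne.image _
  exact Nat.one_le_iff_ne_zero.2 (Finset.card_ne_zero_of_mem this.choose_spec)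

lemma allDiv_wide_zero (k : ℕ) (M : Fin 0 → Fin 0 → Bool) : WideDiv M (allDiv 0) k := by
  intro i hi1 hi2
  exfalso
  have : (allDiv 0).p = 0 := rfl
  rw [this] at hi2
  simp at hi2
  omega

end Dev

end DevMatrix

/-- If the symmetric 0,1-matrix `M` has no `k`-wide symmetric division, then
`stw(M) ≤ 32(k+1)³`. -/
theorem stw_le_of_no_wide_division (n k : ℕ) (hk : 1 ≤ k)
    (M : Fin n → Fin n → Bool) (hM : ∀ i j, M i j = M j i)
    (h : ¬ ∃ D : SymDiv n, WideDiv M D k) :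
    stwM M ≤ 32 * (k + 1) ^ 3 := by
  rcases Nat.eq_zero_or_pos n with hn | hn
  · exfalso
    apply h
    subst hn
    exact ⟨Dev.allDiv 0, Dev.allDiv_wide_zero k M⟩
  rcases eq_or_lt_of_le hk with hk1 | hk2
  · exfalso
    apply h
    exact ⟨Dev.allDiv n, hk1 ▸ Dev.allDiv_wide_one M⟩
  · have hk2' : 2 ≤ k := hk2
    set C₀ := Dev.initCfg n k M hn hk2' with hC₀
    obtain ⟨l, h1, h2, h3, h4⟩ :=
      Dev.buildSeq hM hk2' h (2 * C₀.P.parts.card + C₀.p) C₀ le_rfl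
    have hmem : (32 * (k + 1) ^ 3) ∈
        { b | ∃ l : List (Finpartition (Finset.univ : Finset (Fin n))),
          IsPartitionSeq l ∧ ∀ P ∈ l, matStretch M P ≤ b } := by
      refine ⟨l, ⟨⟨C₀.P, h1, ?_⟩, h2, h3⟩, ?_⟩
      · intro X hX
        have e : C₀.P = ⊥ := rfl
        rw [e, Finpartition.parts_bot, Finset.mem_map] at hX
        obtain ⟨a, -, rfl⟩ := hX
        simp
      · intro P' hP'
        refine le_trans (h4 P' hP') ?_
        calc (8 * k + 1) * (2 * k - 2)
            ≤ (8 * k + 8) * (2 * k + 2) := Nat.mul_le_mul (by omega) (by omega)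
          _ = 16 * (k + 1) ^ 2 := by ring
          _ ≤ 32 * (k + 1) ^ 3 := by
              have e3 : 32 * (k + 1) ^ 3 = (32 * (k + 1)) * (k + 1) ^ 2 := by ring
              rw [e3]
              exact Nat.mul_le_mul_right _ (by omega)
    exact Nat.sInf_le hmem

end StretchPaper
end
end

section
/- For all integers d ≥ 1 and t ≥ 1 and every ordered graph (G,≺) with maximum degree at most d and stw(G,≺) ≤ t, the overlap graph Ov(G,≺) has no K_{N,N} subgraph with N = 4td². -/
open Finset

noncomputable section
open scoped Classical
set_option linter.unusedSectionVars false
set_option linter.unusedVariables false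

namespace StretchPaper

/-! ### Partitions, red graphs, component twin-width and stretch-width of graphs -/

variable {V : Type} [Fintype V] [DecidableEq V]

/-! ### Symmetric 0,1-matrices: stretch-width and divisions -/

variable {n : ℕ}

/-! ### Auxiliary lemmas for the main theorem -/

section AuxSym
variable {α : Type} [LinearOrder α]

lemma eL_mk (a b : α) : eL s(a, b) = min a b := rfl
lemma eR_mk (a b : α) : eR s(a, b) = max a b := rfl

lemma mk_eL_eR (e : Sym2 α) : s(eL e, eR e) = e := by
  induction e using Sym2.ind with
  | _ a b =>
    rw [eL_mk, eR_mk]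
    rcases le_total a b with h | h
    · rw [min_eq_left h, max_eq_right h]
    · rw [min_eq_right h, max_eq_left h, Sym2.eq_swap]

lemma mem_iff_eL_eR {x : α} {e : Sym2 α} : x ∈ e ↔ x = eL e ∨ x = eR e := by
  conv_lhs => rw [← mk_eL_eR e]
  exact Sym2.mem_iff

lemma cross_symm {e f : Sym2 α} (h : Cross e f) : Cross f e := h.elim Or.inr Or.inl

end AuxSym

section AuxMain
variable {V : Type} [Fintype V] [DecidableEq V] [LinearOrder V]

lemma mem_conv {X : Finset V} {v : V} :
    v ∈ conv X ↔ (∃ a ∈ X, a ≤ v) ∧ ∃ b ∈ X, v ≤ b := by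
  simp [conv]

lemma mem_conv_of_mem {X : Finset V} {v : V} (h : v ∈ X) : v ∈ conv X :=
  mem_conv.2 ⟨⟨v, h, le_rfl⟩, ⟨v, h, le_rfl⟩⟩

lemma mem_conv_of_between {X : Finset V} {a b v : V} (ha : a ∈ X) (hb : b ∈ X)
    (hav : a ≤ v) (hvb : v ≤ b) : v ∈ conv X :=
  mem_conv.2 ⟨⟨a, ha, hav⟩, ⟨b, hb, hvb⟩⟩

lemma conv_mono {X Y : Finset V} (h : X ⊆ Y) : conv X ⊆ conv Y := by
  intro v hv
  obtain ⟨⟨a, ha, hav⟩, ⟨b, hb, hvb⟩⟩ := mem_conv.1 hv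
  exact mem_conv_of_between (h ha) (h hb) hav hvb

lemma conv_singleton (z : V) : conv ({z} : Finset V) = {z} := by
  ext x
  constructor
  · intro hx
    obtain ⟨⟨a, ha, hax⟩, ⟨b, hb, hxb⟩⟩ := mem_conv.1 hx
    rw [mem_singleton] at ha hb
    subst ha; subst hb
    rw [mem_singleton]
    exact le_antisymm hxb hax
  · intro hx
    rw [mem_singleton] at hx
    subst hx
    exact mem_conv_of_mem (mem_singleton_self x)

lemma adj_eL_eR {G : SimpleGraph V} {e : Sym2 V} (he : e ∈ G.edgeSet) :
    G.Adj (eL e) (eR e) := by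
  rw [← SimpleGraph.mem_edgeSet, mk_eL_eR]; exact he

/-- The number of edges of `S ⊆ E(G)` containing a vertex `x` is at most the degree bound. -/
lemma card_filter_mem_le (G : SimpleGraph V) (d : ℕ)
    (hdeg : ∀ v : V, (Finset.univ.filter fun u => G.Adj v u).card ≤ d)
    (S : Finset (Sym2 V)) (hS : ↑S ⊆ G.edgeSet) (x : V) :
    (S.filter fun f => x ∈ f).card ≤ d := by
  have key : ∀ f ∈ S.filter (fun f => x ∈ f),
      f = s(x, if eL f = x then eR f else eL f) ∧
        G.Adj x (if eL f = x then eR f else eL f) := by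
    intro f hf
    rw [mem_filter] at hf
    have hadj : G.Adj (eL f) (eR f) := adj_eL_eR (hS hf.1)
    by_cases h2 : eL f = x
    · rw [if_pos h2]
      constructor
      · rw [← h2, mk_eL_eR]
      · rw [← h2]; exact hadj
    · rcases mem_iff_eL_eR.1 hf.2 with h1 | h1
      · exact absurd h1.symm h2
      · rw [if_neg h2]
        constructor
        · rw [h1, Sym2.eq_swap, mk_eL_eR]
        · rw [h1]; exact hadj.symm
  refine le_trans (Finset.card_le_card_of_injOn
    (fun f => if eL f = x then eR f else eL f) ?_ ?_) (hdeg x)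
  · intro f hf
    rw [Finset.mem_coe, mem_filter]
    exact ⟨mem_univ _, (key f hf).2⟩
  · intro f hf f' hf' heq
    have h1 := (key f (Finset.mem_coe.1 hf)).1
    have h2 := (key f' (Finset.mem_coe.1 hf')).1
    simp only at heq
    rw [h1, h2, heq]

/-- Richness: every edge crossed by all of `S` has many `S`-endpoints strictly inside. -/
lemma rich_interior {G : SimpleGraph V} {d t : ℕ} (hd : 1 ≤ d)
    (hdeg : ∀ v : V, (Finset.univ.filter fun u => G.Adj v u).card ≤ d)
    (g : Sym2 V) (S : Finset (Sym2 V)) (hS : ↑S ⊆ G.edgeSet)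
    (hcross : ∀ f ∈ S, Cross g f) (hScard : S.card = 4 * t * d ^ 2)
    (Vs : Finset V) (hVs : ∀ f ∈ S, ∀ x ∈ f, x ∈ Vs) :
    4 * t * d ≤ ((edgeInterior g) ∩ Vs).card := by
  set ch : Sym2 V → V := fun f => if eL g < eL f ∧ eL f < eR g then eL f else eR f with hch
  have hmem : ∀ f ∈ S, ch f ∈ edgeInterior g ∩ Vs ∧ ch f ∈ f := by
    intro f hf
    have hc := hcross f hf
    by_cases hcase : eL g < eL f ∧ eL f < eR g
    · have h1 : ch f = eL f := if_pos hcase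
      refine ⟨?_, ?_⟩
      · rw [h1, mem_inter, edgeInterior, mem_filter]
        exact ⟨⟨mem_univ _, hcase⟩, hVs f hf _ (mem_iff_eL_eR.2 (Or.inl rfl))⟩
      · rw [h1]; exact mem_iff_eL_eR.2 (Or.inl rfl)
    · have h1 : ch f = eR f := if_neg hcase
      have h2 : eL f < eL g ∧ eL g < eR f ∧ eR f < eR g := by
        rcases hc with h | h
        · exact absurd ⟨h.1, h.2.1⟩ hcase
        · exact h
      refine ⟨?_, ?_⟩
      · rw [h1, mem_inter, edgeInterior, mem_filter]
        exact ⟨⟨mem_univ _, h2.2.1, h2.2.2⟩, hVs f hf _ (mem_iff_eL_eR.2 (Or.inr rfl))⟩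
      · rw [h1]; exact mem_iff_eL_eR.2 (Or.inr rfl)
  have hfiber : ∀ x ∈ S.image ch, (S.filter fun f => ch f = x).card ≤ d := by
    intro x _
    refine le_trans (card_le_card ?_) (card_filter_mem_le G d hdeg S hS x)
    intro f hf
    rw [mem_filter] at hf ⊢
    exact ⟨hf.1, hf.2 ▸ (hmem f hf.1).2⟩
  have hcard := Finset.card_le_mul_card_image S d hfiber
  have himg : S.image ch ⊆ edgeInterior g ∩ Vs := by
    intro x hx
    obtain ⟨f, hf, rfl⟩ := mem_image.1 hx
    exact (hmem f hf).1
  have h1 : d * (4 * t * d) ≤ d * (S.image ch).card := by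
    have : (4 : ℕ) * t * d ^ 2 = d * (4 * t * d) := by ring
    rw [hScard, this] at hcard
    exact hcard
  have h2 : 4 * t * d ≤ (S.image ch).card :=
    Nat.le_of_mul_le_mul_left h1 (by omega)
  exact le_trans h2 (card_le_card himg)

end AuxMain


section AuxMain2
variable {V : Type} [Fintype V] [DecidableEq V] [LinearOrder V]

/-- Cap lemma: in a partition with no fired part, every part touching `Vs` has size `≤ d`. -/
lemma caps_lemma {G : SimpleGraph V} {d : ℕ}
    (hdeg : ∀ v : V, (Finset.univ.filter fun u => G.Adj v u).card ≤ d)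
    {Vs : Finset V} {K : ℕ}
    (hspan : ∀ v ∈ Vs, ∃ w, G.Adj v w ∧ K ≤ ((conv ({v, w} : Finset V)) ∩ Vs).card)
    (P : Finpartition (Finset.univ : Finset V))
    (hunfired : ∀ Z ∈ P.parts, ((conv (redClosedNbhd G P Z)) ∩ Vs).card < K)
    {Z : Finset V} (hZ : Z ∈ P.parts) : (Z ∩ Vs).card ≤ d := by
  by_cases hZV : (Z ∩ Vs).Nonempty
  · obtain ⟨v, hv⟩ := hZV
    rw [mem_inter] at hv
    obtain ⟨w, hadj, hK⟩ := hspan v hv.2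
    obtain ⟨W, hW, hwW⟩ := P.exists_mem (mem_univ w)
    have hZsub : Z ⊆ redClosedNbhd G P Z := subset_union_left
    by_cases hWZ : W = Z
    · exfalso
      have hsub : conv ({v, w} : Finset V) ⊆ conv (redClosedNbhd G P Z) := by
        apply conv_mono
        intro x hx
        rcases mem_insert.1 hx with rfl | hx
        · exact hZsub hv.1
        · rw [mem_singleton] at hx; subst hx
          exact hZsub (hWZ ▸ hwW)
      have := le_trans hK (card_le_card (inter_subset_inter_right hsub))
      exact absurd this (not_le.2 (hunfired Z hZ))
    · by_cases hinh : Inhomog G Z W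
      · exfalso
        have hWsub : W ⊆ redClosedNbhd G P Z := by
          intro x hx
          apply mem_union_right
          rw [mem_biUnion]
          exact ⟨W, mem_filter.2 ⟨hW, hWZ, hinh⟩, hx⟩
        have hsub : conv ({v, w} : Finset V) ⊆ conv (redClosedNbhd G P Z) := by
          apply conv_mono
          intro x hx
          rcases mem_insert.1 hx with rfl | hx
          · exact hZsub hv.1
          · rw [mem_singleton] at hx; subst hx
            exact hWsub hwW
        have := le_trans hK (card_le_card (inter_subset_inter_right hsub))
        exact absurd this (not_le.2 (hunfired Z hZ))
      · -- complete case
        have hall : ∀ x ∈ Z, ∀ y ∈ W, G.Adj x y := by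
          by_contra hc
          push_neg at hc
          obtain ⟨x, hx, y, hy, hnadj⟩ := hc
          exact hinh ⟨⟨v, hv.1, w, hwW, hadj⟩, ⟨x, hx, y, hy, hnadj⟩⟩
        calc (Z ∩ Vs).card ≤ Z.card := card_le_card inter_subset_left
          _ ≤ (Finset.univ.filter fun u => G.Adj w u).card := by
              apply card_le_card
              intro x hx
              rw [mem_filter]
              exact ⟨mem_univ _, (hall x hx w hwW).symm⟩
          _ ≤ d := hdeg w
  · rw [not_nonempty_iff_eq_empty] at hZV
    rw [hZV]
    simp

/-- Find a transition along a chain where a predicate first becomes true. -/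
lemma exists_transition {β : Type*} {R : β → β → Prop} {φ : β → Prop} :
    ∀ (l : List β), l.Chain' R →
    (∀ P, l.head? = some P → ¬ φ P) →
    (∃ Q, l.getLast? = some Q ∧ φ Q) →
    ∃ P Q, P ∈ l ∧ Q ∈ l ∧ R P Q ∧ ¬ φ P ∧ φ Q := by
  intro l
  induction l with
  | nil =>
    rintro _ _ ⟨Q, hQ, _⟩
    simp at hQ
  | cons a l ih =>
    intro hchain hhead hlast
    cases l with
    | nil =>
      obtain ⟨Q, hQ, hφ⟩ := hlast
      simp only [List.getLast?_singleton, Option.some.injEq] at hQ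
      exact absurd (hQ ▸ hφ) (hhead a rfl)
    | cons b l' =>
      by_cases hb : φ b
      · exact ⟨a, b, by simp, by simp, (List.isChain_cons_cons.1 hchain).1, hhead a rfl, hb⟩
      · obtain ⟨P, Q, hP, hQ, hR, h1, h2⟩ := ih (List.isChain_cons_cons.1 hchain).2
          (by
            intro P hP
            simp only [List.head?_cons, Option.some.injEq] at hP
            subst hP
            exact hb)
          (by
            obtain ⟨Q, hQ, hφ⟩ := hlast
            rw [List.getLast?_cons_cons] at hQ
            exact ⟨Q, hQ, hφ⟩)
        exact ⟨P, Q, List.mem_cons_of_mem _ hP, List.mem_cons_of_mem _ hQ, hR, h1, h2⟩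

/-- Merging two parts of a finpartition of `univ`. -/
def mergePartition (P : Finpartition (Finset.univ : Finset V)) (A B : Finset V)
    (hA : A ∈ P.parts) (hB : B ∈ P.parts) (hAB : A ≠ B) :
    Finpartition (Finset.univ : Finset V) where
  parts := insert (A ∪ B) ((P.parts.erase A).erase B)
  supIndep := by
    rw [Finset.supIndep_iff_pairwiseDisjoint]
    have hdisj := P.disjoint
    intro X hX Y hY hXY
    simp only [coe_insert, Set.mem_insert_iff, mem_coe, mem_erase] at hX hY
    rcases hX with rfl | ⟨hXB, hXA, hXp⟩ <;> rcases hY with rfl | ⟨hYB, hYA, hYp⟩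
    · exact absurd rfl hXY
    · show Disjoint (A ∪ B) Y
      rw [disjoint_union_left]
      exact ⟨hdisj hA hYp (Ne.symm hYA), hdisj hB hYp (Ne.symm hYB)⟩
    · show Disjoint X (A ∪ B)
      rw [disjoint_union_right]
      exact ⟨hdisj hXp hA hXA, hdisj hXp hB hXB⟩
    · exact hdisj hXp hYp hXY
  sup_parts := by
    apply le_antisymm
    · apply Finset.sup_le
      intro X _
      exact subset_univ X
    · conv_lhs => rw [← P.sup_parts]
      apply Finset.sup_le
      intro C hC
      by_cases h1 : C = A
      · subst h1
        exact le_trans (subset_union_left : C ≤ C ∪ B)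
          (Finset.le_sup (f := id) (mem_insert_self (C ∪ B) ((P.parts.erase C).erase B)))
      · by_cases h2 : C = B
        · subst h2
          exact le_trans (subset_union_right : C ≤ A ∪ C)
            (Finset.le_sup (f := id) (mem_insert_self (A ∪ C) ((P.parts.erase A).erase C)))
        · exact Finset.le_sup (f := id)
            (mem_insert_of_mem (by rw [mem_erase, mem_erase]; exact ⟨h2, h1, hC⟩))
  bot_notMem := by
    intro h
    rcases mem_insert.1 h with h | h
    · obtain ⟨a, ha⟩ := P.nonempty_of_mem_parts hA
      have : a ∈ (⊥ : Finset V) := by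
        rw [h]
        exact mem_union_left _ ha
      simp at this
    · exact P.bot_notMem (mem_of_mem_erase (mem_of_mem_erase h))

lemma mergePartition_card (P : Finpartition (Finset.univ : Finset V)) (A B : Finset V)
    (hA : A ∈ P.parts) (hB : B ∈ P.parts) (hAB : A ≠ B) :
    (mergePartition P A B hA hB hAB).parts.card = P.parts.card - 1 := by
  have hnot : A ∪ B ∉ (P.parts.erase A).erase B := by
    intro h
    have hne := mem_erase.1 h
    have hne2 := mem_erase.1 hne.2
    have hmem : A ∪ B ∈ P.parts := hne2.2
    have hd : Disjoint A (A ∪ B) := P.disjoint hA hmem (Ne.symm hne2.1)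
    obtain ⟨a, ha⟩ := P.nonempty_of_mem_parts hA
    exact (Finset.disjoint_left.1 hd) ha (mem_union_left _ ha)
  have hBe : B ∈ P.parts.erase A := mem_erase.2 ⟨Ne.symm hAB, hB⟩
  show (insert (A ∪ B) ((P.parts.erase A).erase B)).card = P.parts.card - 1
  rw [card_insert_of_notMem hnot, card_erase_of_mem hBe, card_erase_of_mem hA]
  have : 2 ≤ P.parts.card := by
    have h1 : ({A, B} : Finset (Finset V)) ⊆ P.parts := by
      intro x hx
      rcases mem_insert.1 hx with rfl | hx
      · exact hA
      · rw [mem_singleton] at hx; subst hx; exact hB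
    have := card_le_card h1
    rwa [card_pair hAB] at this
  omega

lemma exists_tail (hV : (Finset.univ : Finset V).Nonempty) :
    ∀ (n : ℕ) (P : Finpartition (Finset.univ : Finset V)), P.parts.card ≤ n →
    ∃ l : List (Finpartition (Finset.univ : Finset V)), l.head? = some P ∧
      (∃ Q, l.getLast? = some Q ∧ Q.parts = {Finset.univ}) ∧
      l.Chain' MergeStep := by
  intro n
  induction n with
  | zero =>
    intro P h
    exfalso
    rw [Nat.le_zero, Finset.card_eq_zero] at h
    have := P.sup_parts
    rw [h, Finset.sup_empty] at this
    exact hV.ne_empty this.symm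
  | succ n ih =>
    intro P hP
    by_cases hcard : P.parts.card ≤ 1
    · have hne : P.parts.Nonempty := by
        rw [nonempty_iff_ne_empty]
        intro h
        have := P.sup_parts
        rw [h, Finset.sup_empty] at this
        exact hV.ne_empty this.symm
      have h1 : P.parts.card = 1 := le_antisymm hcard hne.card_pos
      obtain ⟨X, hX⟩ := Finset.card_eq_one.1 h1
      have hXuniv : X = Finset.univ := by
        have := P.sup_parts
        rw [hX, Finset.sup_singleton, id_eq] at this
        exact this
      refine ⟨[P], rfl, ⟨P, rfl, ?_⟩, List.isChain_singleton _⟩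
      rw [hX, hXuniv]
    · push_neg at hcard
      obtain ⟨A, hA, B, hB, hAB⟩ := Finset.one_lt_card.1 hcard
      set Q := mergePartition P A B hA hB hAB with hQ
      have hQc : Q.parts.card ≤ n := by
        rw [hQ, mergePartition_card]
        omega
      obtain ⟨l, hhead, hlast, hchain⟩ := ih Q hQc
      refine ⟨P :: l, rfl, ?_, ?_⟩
      · obtain ⟨R, hR, hRu⟩ := hlast
        refine ⟨R, ?_, hRu⟩
        cases l with
        | nil => simp at hhead
        | cons b l' => rw [List.getLast?_cons_cons]; exact hR
      · cases l with
        | nil => simp at hhead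
        | cons b l' =>
          apply List.isChain_cons_cons.2
          have hb : b = Q := by
            simp only [List.head?_cons, Option.some.injEq] at hhead
            exact hhead
          constructor
          · rw [hb]
            exact ⟨A, hA, B, hB, hAB, rfl⟩
          · exact hchain

lemma exists_partition_seq (hV : (Finset.univ : Finset V).Nonempty) :
    ∃ l : List (Finpartition (Finset.univ : Finset V)), IsPartitionSeq l := by
  obtain ⟨l, hhead, hlast, hchain⟩ :=
    exists_tail hV (⊥ : Finpartition (Finset.univ : Finset V)).parts.card ⊥ le_rfl
  refine ⟨l, ⟨⊥, hhead, ?_⟩, hlast, hchain⟩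
  intro X hX
  rw [Finpartition.parts_bot] at hX
  obtain ⟨a, _, rfl⟩ := Finset.mem_map.1 hX
  simp

lemma le_foldr_max {β : Type*} (f : β → ℕ) :
    ∀ (l : List β), ∀ x ∈ l, f x ≤ l.foldr (fun b acc => max (f b) acc) 0 := by
  intro l
  induction l with
  | nil => intro x hx; simp at hx
  | cons b l ih =>
    intro x hx
    rcases List.mem_cons.1 hx with rfl | hx
    · exact le_max_left _ _
    · exact le_trans (ih x hx) (le_max_right _ _)

lemma exists_seq_of_stwOrd_le {G : SimpleGraph V} {t : ℕ}
    (hV : (Finset.univ : Finset V).Nonempty) (h : stwOrd G ≤ t) :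
    ∃ l, IsPartitionSeq l ∧ ∀ P ∈ l, stretchPartition G P ≤ t := by
  obtain ⟨l0, hl0⟩ := exists_partition_seq hV
  have hne : {k | ∃ l, IsPartitionSeq l ∧
      ∀ P ∈ l, stretchPartition (V := V) G P ≤ k}.Nonempty := by
    refine ⟨l0.foldr (fun b acc => max (stretchPartition G b) acc) 0, l0, hl0, ?_⟩
    intro P hP
    exact le_foldr_max (stretchPartition G) l0 P hP
  have hmem := Nat.sInf_mem hne
  obtain ⟨l, hl, hbound⟩ := hmem
  exact ⟨l, hl, fun P hP => le_trans (hbound P hP) h⟩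

end AuxMain2

/-- If `(G, ≤)` has maximum degree at most `d` and `stw(G, ≤) ≤ t`, then the overlap graph
of `(G, ≤)` has no `K_{N,N}` subgraph with `N = 4td²`. -/
theorem no_Ktt_of_bounded_degree_and_stw {V : Type} [Fintype V] [DecidableEq V]
    [LinearOrder V] (d t : ℕ) (hd : 1 ≤ d) (ht : 1 ≤ t) (G : SimpleGraph V)
    (hdeg : ∀ v : V, (Finset.univ.filter fun u => G.Adj v u).card ≤ d)
    (hstw : stwOrd G ≤ t) :
    ¬ OvHasKtt G (4 * t * d ^ 2) := by
  intro hov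
  obtain ⟨A, B, hAe, hBe, hABdisj, hAcard, hBcard, hcross⟩ := hov
  have hA4 : 4 ≤ A.card := by
    rw [hAcard]
    calc 4 = 4 * 1 * 1 ^ 2 := by norm_num
      _ ≤ 4 * t * d ^ 2 := Nat.mul_le_mul (Nat.mul_le_mul le_rfl ht) (Nat.pow_le_pow_left hd 2)
  obtain ⟨g0, hg0⟩ := Finset.card_pos.1 (by omega : 0 < A.card)
  have hVne : (Finset.univ : Finset V).Nonempty := ⟨eL g0, mem_univ _⟩
  obtain ⟨l, hseq, hstretch⟩ := exists_seq_of_stwOrd_le hVne hstw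
  set Vs : Finset V := Finset.univ.filter (fun x => ∃ g ∈ A ∪ B, x ∈ g) with hVsdef
  set K : ℕ := 4 * t * d with hKdef
  have hK4 : 4 ≤ K := by
    rw [hKdef]
    calc 4 = 4 * 1 * 1 := by norm_num
      _ ≤ 4 * t * d := Nat.mul_le_mul (Nat.mul_le_mul le_rfl ht) hd
  have hVsmem : ∀ g ∈ A ∪ B, ∀ x ∈ g, x ∈ Vs := by
    intro g hg x hx
    rw [hVsdef, mem_filter]
    exact ⟨mem_univ _, g, hg, hx⟩
  have hrich : ∀ g ∈ A ∪ B, K ≤ ((edgeInterior g) ∩ Vs).card := by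
    intro g hg
    rcases mem_union.1 hg with hgA | hgB
    · exact rich_interior hd hdeg g B hBe (fun f hf => hcross g hgA f hf) hBcard Vs
        (fun f hf x hx => hVsmem f (mem_union_right _ hf) x hx)
    · exact rich_interior hd hdeg g A hAe (fun f hf => cross_symm (hcross f hf g hgB)) hAcard Vs
        (fun f hf x hx => hVsmem f (mem_union_left _ hf) x hx)
  have hspan : ∀ v ∈ Vs, ∃ w, G.Adj v w ∧ K ≤ ((conv ({v, w} : Finset V)) ∩ Vs).card := by
    intro v hv
    rw [hVsdef, mem_filter] at hv
    obtain ⟨-, g, hg, hvg⟩ := hv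
    have hge : g ∈ G.edgeSet := by
      rcases mem_union.1 hg with h | h
      · exact hAe h
      · exact hBe h
    have hadj := adj_eL_eR hge
    have key : ∃ w, G.Adj v w ∧ eL g ∈ ({v, w} : Finset V) ∧ eR g ∈ ({v, w} : Finset V) := by
      rcases mem_iff_eL_eR.1 hvg with h | h
      · exact ⟨eR g, h ▸ hadj, by rw [h]; exact mem_insert_self _ _,
          mem_insert_of_mem (mem_singleton_self _)⟩
      · exact ⟨eL g, h ▸ hadj.symm, mem_insert_of_mem (mem_singleton_self _),
          by rw [h]; exact mem_insert_self _ _⟩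
    obtain ⟨w, hw, hL, hR⟩ := key
    refine ⟨w, hw, le_trans (hrich g hg) (card_le_card (inter_subset_inter_right ?_))⟩
    intro x hx
    rw [edgeInterior, mem_filter] at hx
    exact mem_conv_of_between hL hR (le_of_lt hx.2.1) (le_of_lt hx.2.2)
  obtain ⟨⟨P0, hP0head, hP0sing⟩, ⟨Pl, hPllast, hPlparts⟩, hchain⟩ := hseq
  have hheadnot : ¬ (∃ Z ∈ P0.parts, K ≤ ((conv (redClosedNbhd G P0 Z)) ∩ Vs).card) := by
    rintro ⟨Z, hZ, hK⟩
    obtain ⟨z, hz⟩ := Finset.card_eq_one.1 (hP0sing Z hZ)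
    have hfil : (P0.parts.filter fun Y => Y ≠ Z ∧ Inhomog G Z Y) = ∅ := by
      rw [filter_eq_empty_iff]
      rintro Y hY ⟨hne, ⟨⟨x, hx, y, hy, hadjxy⟩, ⟨x', hx', y', hy', hnadj⟩⟩⟩
      obtain ⟨yy, hyy⟩ := Finset.card_eq_one.1 (hP0sing Y hY)
      rw [hz, mem_singleton] at hx hx'
      rw [hyy, mem_singleton] at hy hy'
      subst hx; subst hy
      rw [hx'] at hnadj
      rw [hy'] at hnadj
      exact hnadj hadjxy
    have hrcn : redClosedNbhd G P0 Z = Z := by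
      rw [redClosedNbhd, hfil]
      simp
    rw [hrcn, hz, conv_singleton] at hK
    have hle : ((({z} : Finset V)) ∩ Vs).card ≤ 1 :=
      le_trans (card_le_card inter_subset_left) (by simp)
    omega
  have hlastfired : ∃ Z ∈ Pl.parts, K ≤ ((conv (redClosedNbhd G Pl Z)) ∩ Vs).card := by
    refine ⟨Finset.univ, by rw [hPlparts]; exact mem_singleton_self _, ?_⟩
    refine le_trans (hrich g0 (mem_union_left _ hg0)) (card_le_card (inter_subset_inter_right ?_))
    intro x _
    exact mem_conv_of_mem (mem_union_left _ (mem_univ x))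
  obtain ⟨Pprev, Pstar, hPrevl, hPstarl, hmerge, hprevnot, hstarfired⟩ :=
    exists_transition (R := MergeStep)
      (φ := fun P => ∃ Z ∈ P.parts, K ≤ ((conv (redClosedNbhd G P Z)) ∩ Vs).card)
      l hchain
      (by
        intro P hP
        rw [hP0head, Option.some_inj] at hP
        rw [← hP]
        exact hheadnot)
      ⟨Pl, hPllast, hlastfired⟩
  obtain ⟨Y1, hY1, Y2, hY2, hY12, hPparts⟩ := hmerge
  obtain ⟨Xs, hXs, hfired⟩ := hstarfired
  have hstretchXs : stretchPart G Pstar Xs ≤ t :=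
    le_trans (Finset.le_sup hXs) (hstretch Pstar hPstarl)
  have hunfired : ∀ Z ∈ Pprev.parts, ((conv (redClosedNbhd G Pprev Z)) ∩ Vs).card < K := by
    intro Z hZ
    by_contra hc
    push_neg at hc
    exact hprevnot ⟨Z, hZ, hc⟩
  have hcap : ∀ Z ∈ Pprev.parts, (Z ∩ Vs).card ≤ d :=
    fun Z hZ => caps_lemma hdeg hspan Pprev hunfired hZ
  set H := insert Xs ((Pstar.parts.erase Xs).filter
    fun Y => Conflict Y (redClosedNbhd G Pstar Xs)) with hH
  have hCsub : (conv (redClosedNbhd G Pstar Xs)) ∩ Vs ⊆ H.biUnion (fun Z => Z ∩ Vs) := by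
    intro u hu
    obtain ⟨Z, hZ, huZ⟩ := Pstar.exists_mem (mem_univ u)
    rw [mem_biUnion]
    refine ⟨Z, ?_, mem_inter.2 ⟨huZ, (mem_inter.1 hu).2⟩⟩
    rw [hH]
    by_cases hZX : Z = Xs
    · rw [hZX]; exact mem_insert_self _ _
    · apply mem_insert_of_mem
      rw [mem_filter]
      exact ⟨mem_erase.2 ⟨hZX, hZ⟩,
        ⟨u, mem_inter.2 ⟨mem_conv_of_mem huZ, (mem_inter.1 hu).1⟩⟩⟩
  have hcount : ((conv (redClosedNbhd G Pstar Xs)) ∩ Vs).card ≤ ∑ Z ∈ H, (Z ∩ Vs).card :=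
    le_trans (card_le_card hCsub) card_biUnion_le
  have hsummand : ∀ Z ∈ H, (Z ∩ Vs).card ≤ d + (if Z = Y1 ∪ Y2 then d else 0) := by
    intro Z hZ
    have hZparts : Z ∈ Pstar.parts := by
      rw [hH] at hZ
      rcases mem_insert.1 hZ with h | hZ'
      · rw [h]; exact hXs
      · exact mem_of_mem_erase (mem_filter.1 hZ').1
    rw [hPparts] at hZparts
    rcases mem_insert.1 hZparts with h | hold
    · rw [if_pos h, h]
      calc ((Y1 ∪ Y2) ∩ Vs).card = ((Y1 ∩ Vs) ∪ (Y2 ∩ Vs)).card := by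
            rw [union_inter_distrib_right]
        _ ≤ (Y1 ∩ Vs).card + (Y2 ∩ Vs).card := card_union_le _ _
        _ ≤ d + d := Nat.add_le_add (hcap Y1 hY1) (hcap Y2 hY2)
    · have h1 : Z ∈ Pprev.parts := mem_of_mem_erase (mem_of_mem_erase hold)
      have := hcap Z h1
      omega
  have hsum2 : ∑ Z ∈ H, (Z ∩ Vs).card ≤ H.card * d + d := by
    calc ∑ Z ∈ H, (Z ∩ Vs).card
        ≤ ∑ Z ∈ H, (d + (if Z = Y1 ∪ Y2 then d else 0)) := Finset.sum_le_sum hsummand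
      _ = H.card * d + ∑ Z ∈ H, (if Z = Y1 ∪ Y2 then d else 0) := by
            rw [Finset.sum_add_distrib, Finset.sum_const, smul_eq_mul]
      _ ≤ H.card * d + d := by
            rw [Finset.sum_ite_eq' H (Y1 ∪ Y2) (fun _ => d)]
            split <;> omega
  have hHcard : H.card ≤ t + 1 := by
    rw [hH]
    refine le_trans (card_insert_le _ _) ?_
    have heq : ((Pstar.parts.erase Xs).filter
        fun Y => Conflict Y (redClosedNbhd G Pstar Xs)).card = stretchPart G Pstar Xs := rfl
    omega
  have hfin : K ≤ (t + 1) * d + d := by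
    calc K ≤ ((conv (redClosedNbhd G Pstar Xs)) ∩ Vs).card := hfired
      _ ≤ ∑ Z ∈ H, (Z ∩ Vs).card := hcount
      _ ≤ H.card * d + d := hsum2
      _ ≤ (t + 1) * d + d := by
          have := Nat.mul_le_mul_right d hHcard
          omega
  rw [hKdef] at hfin
  have htd : d ≤ t * d := Nat.le_mul_of_pos_left d (by omega)
  nlinarith [hfin, htd, hd, ht]

end StretchPaper
end
end
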